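/- arXiv:1011.1524 — 12 statements merged into one kernel-verified Lean document; each statement's English description precedes it below -/
import Mathlib

section
/- Every Hausdorff topological group without nontrivial convergent sequences is sequentially Weil complete; that is, every left Cauchy sequence in such a group converges. -/
/-- A sequence in a topological group is *left Cauchy* if for every neighborhood `U`
of the identity there is `k` such that `(u l)⁻¹ * u m ∈ U` whenever `l, m ≥ k`. -/
def IsLeftCauchy {G : Type*} [Group G] [TopologicalSpace G] (u : ℕ → G) : Prop :=
  ∀ U ∈ nhds (1 : G), ∃ k : ℕ, ∀ l m : ℕ, k ≤ l → k ≤ m → (u l)⁻¹ * u m ∈ U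

/-- Every Hausdorff topological group without nontrivial convergent sequences
(i.e. every convergent sequence is eventually constant) is sequentially Weil complete:
every left Cauchy sequence converges. -/
theorem stmt0 {G : Type*} [Group G] [TopologicalSpace G] [IsTopologicalGroup G] [T2Space G]
    (hno : ∀ (a : ℕ → G) (x : G), Filter.Tendsto a Filter.atTop (nhds x) →
      ∃ N : ℕ, ∀ n ≥ N, a n = a N)
    (u : ℕ → G) (hu : IsLeftCauchy u) :
    ∃ x : G, Filter.Tendsto u Filter.atTop (nhds x) := by
  set a : ℕ → G := fun n => (u n)⁻¹ * u (n + 1) with ha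
  have hta : Filter.Tendsto a Filter.atTop (nhds 1) := by
    intro U hU
    rw [Filter.mem_map, Filter.mem_atTop_sets]
    obtain ⟨k, hk⟩ := hu U hU
    exact ⟨k, fun n hn => hk n (n + 1) hn (le_trans hn (Nat.le_succ n))⟩
  obtain ⟨N, hN⟩ := hno a 1 hta
  have hconst : Filter.Tendsto a Filter.atTop (nhds (a N)) := by
    refine Filter.Tendsto.congr' ?_ tendsto_const_nhds
    filter_upwards [Filter.eventually_ge_atTop N] with n hn
    exact (hN n hn).symm
  have haN : a N = 1 := tendsto_nhds_unique hconst hta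
  have huconst : ∀ n ≥ N, u n = u N := by
    intro n hn
    induction n with
    | zero => simp_all
    | succ m ih =>
      rcases Nat.lt_or_ge m N with h | h
      · have : N = m + 1 := le_antisymm hn h
        rw [this]
      · have hm : a m = 1 := (hN m h).trans haN
        have : u m = u (m + 1) := inv_mul_eq_one.mp hm
        rw [← this, ih h]
  refine ⟨u N, ?_⟩
  refine Filter.Tendsto.congr' ?_ tendsto_const_nhds
  filter_upwards [Filter.eventually_ge_atTop N] with n hn
  exact (huconst n hn).symm
end

section
/- An NSS topological group contains no f_ω-Cauchy productive sequences, where f_ω is the constant weight function allowing arbitrary integer exponents. -/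
/-- An NSS topological group (one having a neighborhood of the identity that contains
no nontrivial subgroup) contains no `f_ω`-Cauchy productive sequence: there is no
faithfully indexed sequence `{a_n}` such that for every `z : ℕ → ℤ` the partial
products of `{a_n ^ z n}` form a left Cauchy sequence. -/
theorem stmt5 {G : Type*} [Group G] [TopologicalSpace G] [IsTopologicalGroup G] [T2Space G]
    (hNSS : ∃ U ∈ nhds (1 : G), ∀ H : Subgroup G, (H : Set G) ⊆ U → H = ⊥) :
    ¬ ∃ a : ℕ → G, Function.Injective a ∧ ∀ z : ℕ → ℤ,
      IsLeftCauchy (fun m => ((List.range (m + 1)).map (fun n => a n ^ z n)).prod) := by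
  rintro ⟨a, hinj, hC⟩
  obtain ⟨U, hU, hsub⟩ := hNSS
  -- choose exponents z n with a n ^ z n ∉ U whenever a n ≠ 1
  have hz : ∀ n : ℕ, ∃ k : ℤ, a n = 1 ∨ a n ^ k ∉ U := by
    intro n
    by_cases h : a n = 1
    · exact ⟨0, Or.inl h⟩
    · by_contra hcon
      push_neg at hcon
      have hsubU : (Subgroup.zpowers (a n) : Set G) ⊆ U := by
        rintro x ⟨k, rfl⟩
        exact (hcon k).2
      have := hsub _ hsubU
      have hmem : a n ∈ Subgroup.zpowers (a n) := Subgroup.mem_zpowers _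
      rw [this, Subgroup.mem_bot] at hmem
      exact h hmem
  choose z hzspec using hz
  obtain ⟨k, hk⟩ := hC z U hU
  -- the successive quotient of partial products is a n ^ z n
  have hquot : ∀ n : ℕ,
      (((List.range (n + 1)).map (fun i => a i ^ z i)).prod)⁻¹ *
        ((List.range (n + 1 + 1)).map (fun i => a i ^ z i)).prod = a (n + 1) ^ z (n + 1) := by
    intro n
    rw [List.range_succ (n := n + 1), List.map_append, List.prod_append]
    simp
  have key : ∀ n : ℕ, k ≤ n → a (n + 1) ^ z (n + 1) ∈ U := by
    intro n hn
    have := hk n (n + 1) hn (le_trans hn (Nat.le_succ n))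
    simpa [hquot n] using this
  -- injectivity: a (k+1) and a (k+2) cannot both be 1
  have hne : a (k + 1) ≠ 1 ∨ a (k + 2) ≠ 1 := by
    by_contra hcon
    push_neg at hcon
    have : a (k + 1) = a (k + 2) := by rw [hcon.1, hcon.2]
    exact (Nat.succ_ne_self (k + 1)).symm (by simpa using hinj this)
  rcases hne with h | h
  · exact ((hzspec (k + 1)).resolve_left h) (key k le_rfl)
  · exact ((hzspec (k + 2)).resolve_left h) (key (k + 1) (Nat.le_succ k))
end

section
/- If f : ℕ → ℕ\{0} is a bounded weight function, then a sequence in an abelian topological group is f-summable if and only if it is f_1*-summable, where f_1 is the constant function 1. That is, subseries convergence of ∑ a_n implies summability of {z(n)·a_n} for every z : ℕ → ℤ with |z(n)| ≤ f(n). -/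
/-- Partial sums of a sequence in an abelian group. -/
def partialSums {G : Type*} [AddCommGroup G] (b : ℕ → G) (m : ℕ) : G :=
  ∑ n ∈ Finset.range (m + 1), b n

lemma sum_indicator_lt (t k : ℕ) (h : t ≤ k) :
    ∑ i ∈ Finset.range k, (if i < t then (1:ℤ) else 0) = t := by
  induction k with
  | zero => interval_cases t; simp
  | succ k ih =>
    rw [Finset.sum_range_succ]
    rcases Nat.lt_or_ge t (k+1) with h1 | h1
    · rw [ih (by omega), if_neg (by omega)]; ring
    · have ht : t = k + 1 := by omega
      subst ht
      rw [if_pos (by omega), Finset.sum_ite_of_true (fun i hi => by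
        simp only [Finset.mem_range] at hi; omega)]
      simp

/-- If `f : ℕ → ℕ \ {0}` is a bounded weight function, then a sequence `{a_n}` in an
abelian topological group is `f`-summable (partial sums of `{z n • a n}` converge for
every `z : ℕ → ℤ` with `|z n| ≤ f n`) if and only if it is `f₁*`-summable (the same for
every `z : ℕ → ℕ` with `z n ≤ 1`, i.e. subseries convergence of `∑ a_n`). -/
theorem stmt7 {G : Type*} [AddCommGroup G] [TopologicalSpace G] [IsTopologicalAddGroup G]
    (f : ℕ → ℕ) (hfpos : ∀ n, 0 < f n) (hfbd : ∃ k : ℕ, ∀ n, f n ≤ k)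
    (a : ℕ → G) (ha : Function.Injective a) :
    (∀ z : ℕ → ℤ, (∀ n, (z n).natAbs ≤ f n) →
      ∃ x : G, Filter.Tendsto (partialSums (fun n => z n • a n)) Filter.atTop (nhds x)) ↔
    (∀ z : ℕ → ℕ, (∀ n, z n ≤ 1) →
      ∃ x : G, Filter.Tendsto (partialSums (fun n => z n • a n)) Filter.atTop (nhds x)) := by
  constructor
  · intro h z hz
    obtain ⟨x, hx⟩ := h (fun n => (z n : ℤ)) (fun n => by
      simpa using le_trans (hz n) (hfpos n))
    refine ⟨x, ?_⟩
    have he : (fun n => ((z n : ℤ)) • a n) = fun n => z n • a n :=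
      funext fun n => natCast_zsmul _ _
    rwa [he] at hx
  · intro h z hz
    obtain ⟨k, hk⟩ := hfbd
    set u : ℕ → ℕ → ℕ := fun i n => if (i : ℤ) < z n then 1 else 0 with hu_def
    set v : ℕ → ℕ → ℕ := fun i n => if (i : ℤ) < -z n then 1 else 0 with hv_def
    have hub : ∀ i n, u i n ≤ 1 := fun i n => by simp only [hu_def]; split <;> simp
    have hvb : ∀ i n, v i n ≤ 1 := fun i n => by simp only [hv_def]; split <;> simp
    choose x hx using fun i => h (u i) (hub i)
    choose y hy using fun i => h (v i) (hvb i)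
    -- coefficient identity
    have key : ∀ n, z n = (∑ i ∈ Finset.range k, (u i n : ℤ)) -
        ∑ i ∈ Finset.range k, (v i n : ℤ) := by
      intro n
      have hzk : (z n).natAbs ≤ k := le_trans (hz n) (hk n)
      have h1 : ∑ i ∈ Finset.range k, (u i n : ℤ) = ((z n).toNat : ℤ) := by
        have : ∀ i, ((u i n : ℤ)) = if i < (z n).toNat then (1:ℤ) else 0 := by
          intro i
          simp only [hu_def]
          by_cases hi : (i : ℤ) < z n
          · rw [if_pos hi, if_pos (Int.lt_toNat.mpr hi)]; simp
          · rw [if_neg hi, if_neg (fun hc => hi (Int.lt_toNat.mp hc))]; simp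
        rw [Finset.sum_congr rfl (fun i _ => this i)]
        exact sum_indicator_lt _ _ (le_trans (by omega) hzk)
      have h2 : ∑ i ∈ Finset.range k, (v i n : ℤ) = (((-z n)).toNat : ℤ) := by
        have : ∀ i, ((v i n : ℤ)) = if i < (-z n).toNat then (1:ℤ) else 0 := by
          intro i
          simp only [hv_def]
          by_cases hi : (i : ℤ) < -z n
          · rw [if_pos hi, if_pos (Int.lt_toNat.mpr hi)]; simp
          · rw [if_neg hi, if_neg (fun hc => hi (Int.lt_toNat.mp hc))]; simp
        rw [Finset.sum_congr rfl (fun i _ => this i)]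
        exact sum_indicator_lt _ _ (le_trans (by omega) hzk)
      rw [h1, h2, Int.toNat_sub_toNat_neg]
    -- partial sums identity
    have hps : ∀ m, partialSums (fun n => z n • a n) m =
        (∑ i ∈ Finset.range k, partialSums (fun n => u i n • a n) m) -
        ∑ i ∈ Finset.range k, partialSums (fun n => v i n • a n) m := by
      intro m
      have step : ∀ n, z n • a n = (∑ i ∈ Finset.range k, u i n • a n) -
          ∑ i ∈ Finset.range k, v i n • a n := by
        intro n
        rw [key n, sub_smul, Finset.sum_smul, Finset.sum_smul]
        congr 1 <;> exact Finset.sum_congr rfl fun i _ => natCast_zsmul _ _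
      simp only [partialSums, step, Finset.sum_sub_distrib]
      congr 1 <;> exact Finset.sum_comm
    refine ⟨(∑ i ∈ Finset.range k, x i) - ∑ i ∈ Finset.range k, y i, ?_⟩
    have : Filter.Tendsto (fun m =>
        (∑ i ∈ Finset.range k, partialSums (fun n => u i n • a n) m) -
        ∑ i ∈ Finset.range k, partialSums (fun n => v i n • a n) m) Filter.atTop
        (nhds ((∑ i ∈ Finset.range k, x i) - ∑ i ∈ Finset.range k, y i)) :=
      (tendsto_finset_sum _ (fun i _ => hx i)).sub (tendsto_finset_sum _ (fun i _ => hy i))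
    exact this.congr (fun m => (hps m).symm)
end

section
/- Let {U_n : n ∈ ℕ} be a family of subsets of a group G with e ∈ U_{n+1}³ ⊆ U_n for every n ∈ ℕ. If φ : ℕ → ℕ is an injection, 0 ≤ l ≤ m are integers and s = min{φ(n) : l ≤ n ≤ m} > 0, then the product U_{φ(l)} · U_{φ(l+1)} · ⋯ · U_{φ(m)} is contained in U_{s-1}. -/
open Pointwise

private theorem stmt8_aux {G : Type*} [Group G] (U : ℕ → Set G)
    (hU : ∀ n : ℕ, (1 : G) ∈ U (n + 1) * U (n + 1) * U (n + 1) ∧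
      U (n + 1) * U (n + 1) * U (n + 1) ⊆ U n)
    (φ : ℕ → ℕ) (hφ : Function.Injective φ) (v : ℕ → G) :
    ∀ N l m s : ℕ, m + 1 - l ≤ N → l ≤ m → 0 < s →
      (∀ n : ℕ, l ≤ n → n ≤ m → s ≤ φ n) →
      (∃ n : ℕ, l ≤ n ∧ n ≤ m ∧ φ n = s) →
      (∀ n : ℕ, l ≤ n → n ≤ m → v n ∈ U (φ n)) →
      ((List.range' l (m + 1 - l)).map v).prod ∈ U (s - 1) := by
  have hone : ∀ n : ℕ, (1 : G) ∈ U (n + 1) := fun n => (hU (n + 1)).2 (hU (n + 1)).1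
  have hmono : ∀ n : ℕ, U (n + 1) ⊆ U n := by
    intro n x hx
    apply (hU n).2
    have h1 : (1 : G) ∈ U (n + 1) := hone n
    have : x * 1 * 1 ∈ U (n + 1) * U (n + 1) * U (n + 1) :=
      Set.mul_mem_mul (Set.mul_mem_mul hx h1) h1
    simpa using this
  have hmono' : ∀ a b : ℕ, a ≤ b → U b ⊆ U a := by
    intro a b hab
    induction hab with
    | refl => exact fun _ h => h
    | step h ih => exact fun x hx => ih (hmono _ hx)
  intro N
  induction N with
  | zero => intro l m s hN hlm; omega
  | succ N ih =>
    intro l m s hN hlm hs hmin hatt hv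
    obtain ⟨k, hlk, hkm, hφk⟩ := hatt
    have hone' : (1 : G) ∈ U s := by
      have := hone (s - 1); rwa [Nat.sub_add_cancel hs] at this
    have side : ∀ a b : ℕ, l ≤ a → b ≤ m → a ≤ b → b + 1 - a ≤ N → (k < a ∨ b < k) →
        ((List.range' a (b + 1 - a)).map v).prod ∈ U s := by
      intro a b hla hbm hab hNab hk
      have hne : ((Finset.Icc a b).image φ).Nonempty :=
        Finset.Nonempty.image (Finset.nonempty_Icc.2 hab) φ
      set t := ((Finset.Icc a b).image φ).min' hne with ht
      obtain ⟨n0, hn0, hφn0⟩ := Finset.mem_image.1 (Finset.min'_mem _ hne)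
      rw [Finset.mem_Icc] at hn0
      have hst : s ≤ t := by
        rw [ht, ← hφn0]; exact hmin n0 (le_trans hla hn0.1) (le_trans hn0.2 hbm)
      have hts : s + 1 ≤ t := by
        rcases Nat.eq_or_lt_of_le hst with he | hl
        · exfalso
          have : φ n0 = φ k := by rw [hφn0, ← ht, ← he, hφk]
          have := hφ this
          omega
        · omega
      have hmem := ih a b t hNab hab (by omega)
        (fun n hn1 hn2 =>
          Finset.min'_le _ _ (Finset.mem_image_of_mem φ (Finset.mem_Icc.2 ⟨hn1, hn2⟩)))
        ⟨n0, hn0.1, hn0.2, hφn0⟩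
        (fun n hn1 hn2 => hv n (le_trans hla hn1) (le_trans hn2 hbm))
      exact hmono' s (t - 1) (by omega) hmem
    have hA : ((List.range' l (k - l)).map v).prod ∈ U s := by
      rcases Nat.eq_or_lt_of_le hlk with he | hlt
      · rw [← he]; simpa using hone'
      · have := side l (k - 1) le_rfl (by omega) (by omega) (by omega) (Or.inr (by omega))
        rwa [show k - 1 + 1 - l = k - l by omega] at this
    have hB : ((List.range' (k + 1) (m - k)).map v).prod ∈ U s := by
      rcases Nat.eq_or_lt_of_le hkm with he | hlt
      · rw [he]; simpa using hone'
      · have := side (k + 1) m (by omega) le_rfl (by omega) (by omega) (Or.inl (by omega))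
        rwa [show m + 1 - (k + 1) = m - k by omega] at this
    have hvk : v k ∈ U s := hφk ▸ hv k hlk hkm
    have split : List.range' l (m + 1 - l)
        = List.range' l (k - l) ++ k :: List.range' (k + 1) (m - k) := by
      have h1 := @List.range'_append l (k - l) (1 + (m - k)) 1
      rw [show l + 1 * (k - l) = k by omega] at h1
      rw [show m + 1 - l = (k - l) + (1 + (m - k)) by omega, ← h1]
      congr 1
      rw [show 1 + (m - k) = (m - k) + 1 by omega, List.range'_succ]
    rw [split, List.map_append, List.prod_append, List.map_cons, List.prod_cons]
    have hs1 : s - 1 + 1 = s := Nat.succ_pred_eq_of_pos hs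
    apply (hU (s - 1)).2
    rw [hs1]
    rw [← mul_assoc]
    exact Set.mul_mem_mul (Set.mul_mem_mul hA hvk) hB

/-- Reshuffling lemma: let `{U_n}` be subsets of a group `G` with `1 ∈ U_{n+1}³ ⊆ U_n`
for all `n`.  If `φ : ℕ → ℕ` is injective, `l ≤ m`, and
`s = min {φ n : l ≤ n ≤ m} > 0`, then any product `v l * v (l+1) * ⋯ * v m` with
`v n ∈ U (φ n)` lies in `U (s - 1)`. -/
theorem stmt8 {G : Type*} [Group G] (U : ℕ → Set G)
    (hU : ∀ n : ℕ, (1 : G) ∈ U (n + 1) * U (n + 1) * U (n + 1) ∧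
      U (n + 1) * U (n + 1) * U (n + 1) ⊆ U n)
    (φ : ℕ → ℕ) (hφ : Function.Injective φ)
    (l m s : ℕ) (hlm : l ≤ m) (hs : 0 < s)
    (hmin : ∀ n : ℕ, l ≤ n → n ≤ m → s ≤ φ n)
    (hatt : ∃ n : ℕ, l ≤ n ∧ n ≤ m ∧ φ n = s)
    (v : ℕ → G) (hv : ∀ n : ℕ, l ≤ n → n ≤ m → v n ∈ U (φ n)) :
    ((List.range' l (m + 1 - l)).map v).prod ∈ U (s - 1) :=
  stmt8_aux U hU φ hφ v (m + 1 - l) l m s le_rfl hlm hs hmin hatt hv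
end

section
/- Let G be a metric group with an open base {U_n : n ∈ ℕ} at the identity satisfying U_{n+1}³ ⊆ U_n for all n, and let f : ℕ → (ω+1)\{0}. If {a_n : n ∈ ℕ} is a faithfully indexed sequence such that {a_n^z : z ∈ ℤ, |z| ≤ f(n)} ⊆ U_n for every n ∈ ℕ, then {a_n} is unconditionally f-Cauchy productive. -/
open Pointwise

lemma myUmono {G : Type*} [Group G] (U : ℕ → Set G) (hUmem : ∀ n, (1 : G) ∈ U n)
    (hU3 : ∀ n, U (n + 1) * U (n + 1) * U (n + 1) ⊆ U n) :
    ∀ m n, m ≤ n → U n ⊆ U m := by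
  intro m n hmn
  induction n, hmn using Nat.le_induction with
  | base => exact fun _ h => h
  | succ n hmn ih =>
    intro x hx
    refine ih ?_
    have : x * 1 * 1 ∈ U n := hU3 n (Set.mul_mem_mul (Set.mul_mem_mul hx (hUmem _)) (hUmem _))
    simpa using this

lemma mykey {G : Type*} [Group G] (U : ℕ → Set G) (hUmem : ∀ n, (1 : G) ∈ U n)
    (hU3 : ∀ n, U (n + 1) * U (n + 1) * U (n + 1) ⊆ U n) :
    ∀ r (L : List (ℕ × G)), L.length ≤ r → (L.map Prod.fst).Nodup →
      ∀ N, (∀ p ∈ L, N + 1 ≤ p.1 ∧ p.2 ∈ U p.1) → (L.map Prod.snd).prod ∈ U N := by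
  intro r
  induction r with
  | zero =>
    intro L hL _ N _
    have : L = [] := List.length_eq_zero_iff.mp (Nat.le_zero.mp hL)
    subst this
    simpa using hUmem N
  | succ r ih =>
    intro L hL hnd N hmem
    rcases L with _ | ⟨p0, L'⟩
    · simpa using hUmem N
    · -- find minimal first coordinate
      set L := p0 :: L' with hLdef
      have hSne : ∃ n, ∃ g, (n, g) ∈ L := ⟨p0.1, p0.2, by simp [hLdef]⟩
      classical
      let S : Set ℕ := {n | ∃ g, (n, g) ∈ L}
      have hSne' : S.Nonempty := ⟨p0.1, p0.2, by simp [hLdef]⟩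
      obtain ⟨g, hgL⟩ := Nat.sInf_mem hSne'
      set M := sInf S with hM
      have hmin : ∀ q ∈ L, M ≤ q.1 := by
        intro q hq
        exact Nat.sInf_le ⟨q.2, hq⟩
      obtain ⟨L1, L2, hsplit⟩ := List.append_of_mem hgL
      have hlen : L1.length + L2.length ≤ r := by
        have := hL
        rw [hsplit] at this
        simp [List.length_append] at this
        omega
      have hnd' := hnd
      rw [hsplit] at hnd'
      simp only [List.map_append, List.map_cons, List.nodup_append, List.nodup_cons] at hnd'
      obtain ⟨hnd1, ⟨hM2, hnd2⟩, hdisj⟩ := hnd'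
      have hM1 : M ∉ L1.map Prod.fst := by
        intro h
        exact hdisj M h M (by simp) rfl
      have hmem' : ∀ p ∈ L, N + 1 ≤ p.1 ∧ p.2 ∈ U p.1 := hmem
      rw [hsplit] at hmem' hmin
      have hL1 : ∀ p ∈ L1, M + 1 ≤ p.1 ∧ p.2 ∈ U p.1 := by
        intro p hp
        refine ⟨?_, (hmem' p (by simp [hp])).2⟩
        have h1 : M ≤ p.1 := hmin p (by simp [hp])
        have h2 : p.1 ≠ M := by
          intro h
          exact hM1 (h ▸ List.mem_map_of_mem (f := Prod.fst) hp)
        omega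
      have hL2 : ∀ p ∈ L2, M + 1 ≤ p.1 ∧ p.2 ∈ U p.1 := by
        intro p hp
        refine ⟨?_, (hmem' p (by simp [hp])).2⟩
        have h1 : M ≤ p.1 := hmin p (by simp [hp])
        have h2 : p.1 ≠ M := by
          intro h
          exact hM2 (h ▸ List.mem_map_of_mem (f := Prod.fst) hp)
        omega
      have hprod1 : (L1.map Prod.snd).prod ∈ U M := ih L1 (by omega) hnd1 M hL1
      have hprod2 : (L2.map Prod.snd).prod ∈ U M := ih L2 (by omega) hnd2 M hL2
      have hg : g ∈ U M := (hmem' (M, g) (by simp)).2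
      have hMN : N + 1 ≤ M := (hmem' (M, g) (by simp)).1
      have hM1' : M - 1 + 1 = M := by omega
      have : (L1.map Prod.snd).prod * g * (L2.map Prod.snd).prod ∈ U (M - 1) := by
        refine hU3 (M - 1) ?_
        rw [hM1']
        exact Set.mul_mem_mul (Set.mul_mem_mul hprod1 hg) hprod2
      have hsub : U (M - 1) ⊆ U N := myUmono U hUmem hU3 N (M - 1) (by omega)
      have heq : (L.map Prod.snd).prod
          = (L1.map Prod.snd).prod * g * (L2.map Prod.snd).prod := by
        rw [hsplit]
        simp [List.prod_append, mul_assoc]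
      rw [heq]
      exact hsub this

/-- Let `G` be a metrizable topological group with an open base `{U_n}` at the identity
satisfying `U_{n+1}³ ⊆ U_n`, and let `f : ℕ → ℕ∞` be a weight function (with `f n ≥ 1`;
the value `⊤ = ω` imposes no restriction).  If `{a_n}` is a faithfully indexed sequence
with `{a_n ^ z : |z| ≤ f n} ⊆ U n` for every `n`, then `{a_n}` is unconditionally
`f`-Cauchy productive: for every bijection `φ : ℕ → ℕ` and every `z : ℕ → ℤ` with
`|z n| ≤ f (φ n)`, the partial products of `{a_{φ n} ^ z n}` are left Cauchy. -/
theorem stmt9 {G : Type*} [Group G] [TopologicalSpace G] [IsTopologicalGroup G]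
    [TopologicalSpace.MetrizableSpace G]
    (U : ℕ → Set G) (hUopen : ∀ n, IsOpen (U n)) (hUmem : ∀ n, (1 : G) ∈ U n)
    (hbase : ∀ V ∈ nhds (1 : G), ∃ n, U n ⊆ V)
    (hU3 : ∀ n, U (n + 1) * U (n + 1) * U (n + 1) ⊆ U n)
    (f : ℕ → ℕ∞) (hf : ∀ n, 1 ≤ f n)
    (a : ℕ → G) (ha : Function.Injective a)
    (hin : ∀ n, ∀ z : ℤ, ((z.natAbs : ℕ∞) ≤ f n) → a n ^ z ∈ U n) :
    ∀ φ : ℕ → ℕ, Function.Bijective φ →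
      ∀ z : ℕ → ℤ, (∀ n, ((z n).natAbs : ℕ∞) ≤ f (φ n)) →
        IsLeftCauchy (fun m => ((List.range (m + 1)).map (fun n => a (φ n) ^ z n)).prod) := by
  intro φ hφ z hz V hV
  classical
  -- symmetric neighborhood
  have hVinv : V⁻¹ ∈ nhds (1 : G) := by
    have : Continuous (fun x : G => x⁻¹) := continuous_inv
    have := this.continuousAt (x := (1 : G))
    have h := this.preimage_mem_nhds (by simpa using hV)
    simpa [Set.inv_preimage] using h
  obtain ⟨N, hN⟩ := hbase (V ∩ V⁻¹) (Filter.inter_mem hV hVinv)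
  set e := Equiv.ofBijective φ hφ with he
  set k := ((Finset.range (N + 1)).sup (fun i => e.symm i)) + 1 with hk
  have hkφ : ∀ j, k ≤ j → N + 1 ≤ φ j := by
    intro j hj
    by_contra h
    push_neg at h
    have hmem : φ j ∈ Finset.range (N + 1) := Finset.mem_range.mpr h
    have : e.symm (φ j) ≤ (Finset.range (N + 1)).sup (fun i => e.symm i) :=
      Finset.le_sup hmem
    have hej : e.symm (φ j) = j := by
      have : e j = φ j := rfl
      rw [← this, Equiv.symm_apply_apply]
    omega
  refine ⟨k, ?_⟩
  set u : ℕ → G := fun m => ((List.range (m + 1)).map (fun n => a (φ n) ^ z n)).prod with hu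
  have tail : ∀ l m : ℕ, k ≤ l → l ≤ m → (u l)⁻¹ * u m ∈ U N := by
    intro l m hkl hlm
    set c : ℕ → G := fun n => a (φ n) ^ z n with hc
    have hrange : List.range (m + 1)
        = List.range (l + 1) ++ (List.range (m - l)).map (fun i => (l + 1) + i) := by
      have : m + 1 = (l + 1) + (m - l) := by omega
      rw [this, List.range_add]
    have hum : u m = u l * ((List.range (m - l)).map (fun i => c ((l + 1) + i))).prod := by
      simp only [hu, hrange, List.map_append, List.prod_append, List.map_map]
      rfl
    have : (u l)⁻¹ * u m = ((List.range (m - l)).map (fun i => c ((l + 1) + i))).prod := by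
      rw [hum]; group
    rw [this]
    set L : List (ℕ × G) :=
      (List.range (m - l)).map (fun i => (φ ((l + 1) + i), c ((l + 1) + i))) with hL
    have hsnd : L.map Prod.snd = (List.range (m - l)).map (fun i => c ((l + 1) + i)) := by
      simp [hL, List.map_map, Function.comp]
    have hnd : (L.map Prod.fst).Nodup := by
      rw [hL, List.map_map]
      refine List.Nodup.map ?_ (List.nodup_range (n := _))
      intro i j hij
      simp only [Function.comp] at hij
      have := hφ.1 hij
      omega
    have hmemL : ∀ p ∈ L, N + 1 ≤ p.1 ∧ p.2 ∈ U p.1 := by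
      intro p hp
      rw [hL, List.mem_map] at hp
      obtain ⟨i, hi, rfl⟩ := hp
      constructor
      · exact hkφ _ (by omega)
      · exact hin _ _ (hz _)
    have := mykey U hUmem hU3 L.length L le_rfl hnd N hmemL
    rwa [hsnd] at this
  intro l m hl hm
  rcases le_or_gt l m with hlm | hlm
  · exact Set.inter_subset_left (hN (tail l m hl hlm))
  · have h : (u m)⁻¹ * u l ∈ V⁻¹ := Set.inter_subset_right (hN (tail m l hm hlm.le))
    have h' : ((u m)⁻¹ * u l)⁻¹ ∈ V := Set.mem_inv.mp h
    have heq : (u l)⁻¹ * u m = ((u m)⁻¹ * u l)⁻¹ := by group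
    rw [heq]
    exact h'
end

section
/- Every non-discrete metric group contains an unconditionally f-Cauchy productive sequence for every weight function f : ℕ → ℕ\{0}. -/
open Topology
open Topology

lemma aux_step {G : Type*} [Group G] [TopologicalSpace G] [IsTopologicalGroup G]
    {W : Set G} (hW : W ∈ 𝓝 1) :
    ∃ V ∈ 𝓝 (1:G), (∀ x ∈ V, x⁻¹ ∈ V) ∧
      ∀ x y z : G, x ∈ V → y ∈ V → z ∈ V → x * y * z ∈ W := by
  obtain ⟨V₁, hV₁, h1⟩ := exists_nhds_one_split hW
  obtain ⟨V₂, hV₂, h2⟩ := exists_nhds_one_split hV₁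
  have hsub : V₂ ⊆ V₁ := fun v hv => by
    have := h2 v hv 1 (mem_of_mem_nhds hV₂); simpa using this
  refine ⟨V₂ ∩ V₂⁻¹, Filter.inter_mem hV₂ ?_, ?_, ?_⟩
  · exact inv_mem_nhds_one G hV₂
  · intro x hx; exact ⟨hx.2, by simpa using hx.1⟩
  · intro x y z hx hy hz
    exact h1 _ (h2 x hx.1 y hy.1) _ (hsub hz.1)
open Topology

lemma aux_exists_ne {G : Type*} [Group G] [TopologicalSpace G] [IsTopologicalGroup G] [T1Space G]
    (hnd : ¬ DiscreteTopology G) {N : Set G} (hN : N ∈ 𝓝 1) (S : Finset G) :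
    ∃ x, x ∈ N ∧ x ∉ S ∧ x ≠ 1 := by
  by_contra h
  push_neg at h
  apply hnd
  rw [discreteTopology_iff_isOpen_singleton_one]
  have hcl : IsClosed ((↑S : Set G) \ {1}) := (S.finite_toSet.diff (t := _)).isClosed
  have h1 : (1:G) ∉ (↑S : Set G) \ {1} := fun hx => hx.2 rfl
  have hN' : N \ ((↑S : Set G) \ {1}) ∈ 𝓝 (1:G) :=
    Filter.inter_mem hN (hcl.isOpen_compl.mem_nhds h1)
  have hsub : N \ ((↑S : Set G) \ {1}) ⊆ {1} := by
    rintro x ⟨hxN, hx⟩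
    simp only [Set.mem_singleton_iff]
    by_contra hx1
    by_cases hxS : x ∈ (↑S : Set G)
    · exact hx ⟨hxS, hx1⟩
    · exact hx1 (h x hxN (by simpa using hxS))
  have : ({1} : Set G) ∈ 𝓝 (1:G) := Filter.mem_of_superset hN' hsub
  obtain ⟨t, hts, hto, h1t⟩ := mem_nhds_iff.mp this
  have : t = {1} := Set.eq_singleton_iff_unique_mem.mpr ⟨h1t, fun x hx => hts hx⟩
  rwa [← this]

lemma aux_prod {G : Type*} [Group G] (V : ℕ → Set G)
    (hone : ∀ k, (1:G) ∈ V k)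
    (htriple : ∀ k, ∀ x y z : G, x ∈ V (k+1) → y ∈ V (k+1) → z ∈ V (k+1) → x * y * z ∈ V k)
    (hmono : ∀ i j, i ≤ j → V j ⊆ V i)
    (c : ℕ → G) (idx : ℕ → ℕ) (hc : ∀ n, c n ∈ V (idx n + 1)) :
    ∀ (L : ℕ) (s : List ℕ), s.length ≤ L → (s.map idx).Nodup →
      ∀ K, (∀ n ∈ s, K ≤ idx n) → (s.map c).prod ∈ V K := by
  intro L
  induction L with
  | zero =>
    intro s hs _ K _
    have hs0 : s = [] := List.length_eq_zero_iff.mp (Nat.le_zero.mp hs)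
    subst hs0; simpa using hone K
  | succ L ih =>
    intro s hs hnd K hK
    rcases s.eq_nil_or_concat with rfl | hne
    · simpa using hone K
    obtain ⟨n₁, hn₁⟩ : ∃ n, n ∈ s := by
      rcases hne with ⟨l, b, rfl⟩; exact ⟨b, by simp⟩
    obtain ⟨n₀, hn₀s, hn₀min⟩ := Finset.exists_min_image s.toFinset idx ⟨n₁, List.mem_toFinset.mpr hn₁⟩
    rw [List.mem_toFinset] at hn₀s
    obtain ⟨s₁, s₂, rfl⟩ := List.append_of_mem hn₀s
    have hlen : s₁.length + s₂.length ≤ L := by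
      have := hs; simp [List.length_append] at this; omega
    -- nodup facts
    rw [List.map_append, List.map_cons] at hnd
    have hnd1 : (s₁.map idx).Nodup := (List.Nodup.of_append_left hnd)
    have hnd2 : (s₂.map idx).Nodup := (List.Nodup.of_append_right hnd).of_cons
    have hne1 : ∀ n ∈ s₁, idx n ≠ idx n₀ := by
      intro n hn heq
      have hmem : idx n ∈ s₁.map idx := List.mem_map_of_mem (f := idx) hn
      have := (List.disjoint_of_nodup_append hnd) hmem
      simp [heq] at this
    have hne2 : ∀ n ∈ s₂, idx n ≠ idx n₀ := by
      intro n hn heq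
      have := (List.Nodup.of_append_right hnd)
      rw [List.nodup_cons] at this
      exact this.1 (by rw [← heq]; exact List.mem_map_of_mem (f := idx) hn)
    have hlt : ∀ n, n ∈ s₁ ∨ n ∈ s₂ → idx n₀ + 1 ≤ idx n := by
      intro n hn
      have hmem : n ∈ s₁ ++ n₀ :: s₂ := by
        rcases hn with h | h
        · exact List.mem_append_left _ h
        · exact List.mem_append_right _ (List.mem_cons_of_mem _ h)
      have hge := hn₀min n (List.mem_toFinset.mpr hmem)
      have hne : idx n ≠ idx n₀ := by rcases hn with h | h; exacts [hne1 n h, hne2 n h]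
      omega
    have hA : (s₁.map c).prod ∈ V (idx n₀ + 1) :=
      ih s₁ (by omega) hnd1 _ (fun n hn => hlt n (Or.inl hn))
    have hB : (s₂.map c).prod ∈ V (idx n₀ + 1) :=
      ih s₂ (by omega) hnd2 _ (fun n hn => hlt n (Or.inr hn))
    have hprod : ((s₁ ++ n₀ :: s₂).map c).prod
        = (s₁.map c).prod * c n₀ * (s₂.map c).prod := by
      simp [List.prod_append, mul_assoc]
    rw [hprod]
    have hKm : K ≤ idx n₀ := hK n₀ hn₀s
    exact hmono K (idx n₀) hKm (htriple _ _ _ _ hA (hc n₀) hB)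

/-- Every non-discrete metrizable topological group contains, for every weight function
`f : ℕ → ℕ \ {0}`, an unconditionally `f`-Cauchy productive sequence: a faithfully
indexed sequence `{a_n}` such that for every bijection `φ : ℕ → ℕ` and every
`z : ℕ → ℤ` with `|z n| ≤ f (φ n)`, the partial products of `{a_{φ n} ^ z n}`
are left Cauchy. -/
theorem stmt10 {G : Type*} [Group G] [TopologicalSpace G] [IsTopologicalGroup G]
    [TopologicalSpace.MetrizableSpace G]
    (hnd : ¬ DiscreteTopology G) (f : ℕ → ℕ) (hf : ∀ n, 0 < f n) :
    ∃ a : ℕ → G, Function.Injective a ∧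
      ∀ φ : ℕ → ℕ, Function.Bijective φ →
        ∀ z : ℕ → ℤ, (∀ n, (z n).natAbs ≤ f (φ n)) →
          IsLeftCauchy (fun m => ((List.range (m + 1)).map (fun n => a (φ n) ^ z n)).prod) := by
  classical
  letI := TopologicalSpace.metrizableSpaceMetric G
  obtain ⟨B, hB⟩ := (𝓝 (1:G)).exists_antitone_basis
  have hB0 : ∀ k, B k ∈ 𝓝 (1:G) := fun k => hB.1.mem_of_mem trivial
  -- the nested symmetric neighborhoods
  have step' : ∀ p : {S : Set G // S ∈ 𝓝 (1:G)}, ∃ q : {S : Set G // S ∈ 𝓝 (1:G)},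
      (∀ x ∈ q.1, x⁻¹ ∈ q.1) ∧
      (∀ x y z : G, x ∈ q.1 → y ∈ q.1 → z ∈ q.1 → x * y * z ∈ p.1) := by
    intro p
    obtain ⟨V, h1, h2, h3⟩ := aux_step p.2
    exact ⟨⟨V, h1⟩, h2, h3⟩
  choose F hFsym hFtriple using step'
  set Vs : ℕ → {S : Set G // S ∈ 𝓝 (1:G)} := fun k =>
    Nat.rec (F ⟨B 0, hB0 0⟩)
      (fun k Vk => F ⟨Vk.1 ∩ B (k+1), Filter.inter_mem Vk.2 (hB0 (k+1))⟩) k with hVs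
  set V : ℕ → Set G := fun k => (Vs k).1 with hVdef
  have hVnhds : ∀ k, V k ∈ 𝓝 (1:G) := fun k => (Vs k).2
  have hVone : ∀ k, (1:G) ∈ V k := fun k => mem_of_mem_nhds (hVnhds k)
  have hVform : ∀ k, ∃ p, Vs k = F p := by
    intro k; cases k with
    | zero => exact ⟨_, rfl⟩
    | succ k => exact ⟨_, rfl⟩
  have hVsym : ∀ k, ∀ x ∈ V k, x⁻¹ ∈ V k := by
    intro k
    obtain ⟨p, hp⟩ := hVform k
    simpa [hVdef, hp] using hFsym p
  have hVtriple' : ∀ k, ∀ x y z : G, x ∈ V (k+1) → y ∈ V (k+1) → z ∈ V (k+1) →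
      x * y * z ∈ V k ∩ B (k+1) := by
    intro k x y z hx hy hz
    exact hFtriple ⟨V k ∩ B (k+1), Filter.inter_mem (hVnhds k) (hB0 (k+1))⟩ x y z hx hy hz
  have hVtriple : ∀ k, ∀ x y z : G, x ∈ V (k+1) → y ∈ V (k+1) → z ∈ V (k+1) →
      x * y * z ∈ V k := fun k x y z hx hy hz => (hVtriple' k x y z hx hy hz).1
  have hVstep : ∀ k, V (k+1) ⊆ V k := by
    intro k x hx
    have := hVtriple k x 1 1 hx (hVone (k+1)) (hVone (k+1))
    simpa using this
  have hVmono : ∀ i j, i ≤ j → V j ⊆ V i := by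
    intro i j hij
    induction hij with
    | refl => exact fun _ h => h
    | step h ih => exact fun x hx => ih (hVstep _ hx)
  have hVB : ∀ k, V k ⊆ B k := by
    intro k
    cases k with
    | zero =>
      intro x hx
      have := hFtriple ⟨B 0, hB0 0⟩ x 1 1 hx (hVone 0) (hVone 0)
      simpa using this
    | succ k =>
      intro x hx
      have := hVtriple' k x 1 1 hx (hVone (k+1)) (hVone (k+1))
      simpa using this.2
  have hVbasis : ∀ U ∈ 𝓝 (1:G), ∃ K, V K ⊆ U := by
    intro U hU
    obtain ⟨K, -, hK⟩ := hB.1.mem_iff.mp hU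
    exact ⟨K, (hVB K).trans hK⟩
  -- the neighborhoods controlling powers
  set Wn : ℕ → Set G := fun k => {x : G | ∀ z : ℤ, z.natAbs ≤ f k → x ^ z ∈ V (k+1)} with hWdef
  have hWn : ∀ k, Wn k ∈ 𝓝 (1:G) := by
    intro k
    have hfin : ({z : ℤ | z.natAbs ≤ f k}).Finite := by
      apply (Set.finite_Icc (-(f k : ℤ)) (f k)).subset
      intro z hz
      simp only [Set.mem_setOf_eq] at hz
      simp only [Set.mem_Icc]
      omega
    have heq : Wn k = ⋂ z ∈ {z : ℤ | z.natAbs ≤ f k}, (fun x : G => x ^ z) ⁻¹' V (k+1) := by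
      ext x; simp [hWdef]
    rw [heq]
    refine (Filter.biInter_mem hfin).mpr ?_
    intro z hz
    have : ContinuousAt (fun x : G => x ^ z) 1 := (continuous_zpow z).continuousAt
    have h1 : V (k+1) ∈ 𝓝 ((1:G) ^ z) := by rw [one_zpow]; exact hVnhds (k+1)
    exact this.preimage_mem_nhds h1
  -- choose the sequence
  have key : ∀ (k : ℕ) (S : Finset G), ∃ x : G, x ∈ Wn k ∧ x ∉ S ∧ x ≠ 1 :=
    fun k S => aux_exists_ne hnd (hWn k) S
  choose g hg1 hg2 hg3 using key
  set L : ℕ → List G := fun k =>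
    Nat.rec ([] : List G) (fun k Lk => Lk ++ [g k Lk.toFinset]) k with hLdef
  set a : ℕ → G := fun k => g k (L k).toFinset with hadef
  have hL : ∀ k, L (k+1) = L k ++ [a k] := fun k => rfl
  have haW : ∀ k, a k ∈ Wn k := fun k => hg1 _ _
  have haL : ∀ k, a k ∉ (L k).toFinset := fun k => hg2 _ _
  have hmemL : ∀ i j, i < j → a i ∈ L j := by
    intro i j hij
    induction j with
    | zero => omega
    | succ j ih =>
      rw [hL j]
      rcases Nat.lt_succ_iff_lt_or_eq.mp hij with h | h
      · exact List.mem_append_left _ (ih h)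
      · subst h; exact List.mem_append_right _ (by simp)
  have hainj : Function.Injective a := by
    intro i j hij
    by_contra hne
    rcases Nat.lt_or_ge i j with h | h
    · exact haL j (List.mem_toFinset.mpr (hij ▸ hmemL i j h))
    · have h' : j < i := lt_of_le_of_ne h (fun hji => hne hji.symm)
      have hmem : a j ∈ L i := hmemL j i h'
      rw [← hij] at hmem
      exact haL i (List.mem_toFinset.mpr hmem)
  refine ⟨a, hainj, ?_⟩
  intro φ hφ z hz U hU
  obtain ⟨K, hKU⟩ := hVbasis U hU
  set e := Equiv.ofBijective φ hφ with hedef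
  set k₀ : ℕ := (Finset.range (K+1)).sup (fun j => e.symm j) + 1 with hk₀
  have hφlarge : ∀ n, k₀ ≤ n → K < φ n := by
    intro n hn
    by_contra hcon
    push_neg at hcon
    have h1 : e.symm (φ n) = n := by
      have : e n = φ n := rfl
      rw [← this, Equiv.symm_apply_apply]
    have h2 : e.symm (φ n) ≤ k₀ - 1 := by
      rw [hk₀]
      simpa using Finset.le_sup (f := fun j => e.symm j)
        (Finset.mem_range.mpr (Nat.lt_succ_of_le hcon))
    omega
  set c : ℕ → G := fun n => a (φ n) ^ z n with hcdef
  have hc : ∀ n, c n ∈ V (φ n + 1) := fun n => haW (φ n) (z n) (hz n)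
  set u : ℕ → G := fun m => ((List.range (m + 1)).map c).prod with hudef
  have key2 : ∀ l m : ℕ, k₀ ≤ l → l ≤ m → (u l)⁻¹ * u m ∈ V K := by
    intro l m hl hlm
    set s : List ℕ := (List.range (m - l)).map (fun i => (l+1) + i) with hsdef
    have hsplit : List.range (m + 1) = List.range (l + 1) ++ s := by
      rw [hsdef]
      have : m + 1 = (l + 1) + (m - l) := by omega
      rw [this, List.range_add]
    have hum : u m = u l * (s.map c).prod := by
      rw [hudef]
      simp only []
      rw [hsplit, List.map_append, List.prod_append]
    have heq : (u l)⁻¹ * u m = (s.map c).prod := by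
      rw [hum]; group
    rw [heq]
    have hsnd : (s.map φ).Nodup := by
      refine List.Nodup.map hφ.1 ?_
      exact (List.nodup_range (n := _)).map (fun x y => by omega)
    have hsmem : ∀ n ∈ s, K ≤ φ n := by
      intro n hn
      rw [hsdef] at hn
      simp only [List.mem_map, List.mem_range] at hn
      obtain ⟨i, hi, rfl⟩ := hn
      exact le_of_lt (hφlarge _ (by omega))
    exact aux_prod V hVone hVtriple hVmono c φ hc s.length s le_rfl hsnd K hsmem
  refine ⟨k₀, ?_⟩
  intro l m hl hm
  rcases Nat.le_total l m with h | h
  · exact hKU (key2 l m hl h)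
  · have h1 := key2 m l hm h
    have h2 : (u l)⁻¹ * u m = ((u m)⁻¹ * u l)⁻¹ := by group
    exact hKU (h2 ▸ hVsym K _ h1)
end

section
/- A metric group G is NSS if and only if G does not contain an f_ω-Cauchy productive sequence, if and only if G does not contain an unconditionally f_ω-Cauchy productive sequence. -/
/-- A sequence `{a_n}` is `f_ω`-Cauchy productive if for every `z : ℕ → ℤ` the partial
products of `{a_n ^ z n}` are left Cauchy. -/
def IsFOmegaCauchyProductive {G : Type*} [Group G] [TopologicalSpace G] (a : ℕ → G) : Prop :=
  ∀ z : ℕ → ℤ,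
    IsLeftCauchy (fun m => ((List.range (m + 1)).map (fun n => a n ^ z n)).prod)

/- ### Auxiliary lemmas -/

private lemma prod_range_succ_aux {G : Type*} [Group G] (f : ℕ → G) (n : ℕ) :
    ((List.range (n + 1 + 1)).map f).prod = ((List.range (n + 1)).map f).prod * f (n + 1) := by
  rw [List.range_succ, List.map_append, List.prod_append]
  simp

/-- NSS implies no injective f_ω-Cauchy productive sequence. -/
private lemma nss_no_prod {G : Type*} [Group G] [TopologicalSpace G]
    (U : Set G) (hU : U ∈ nhds 1) (hns : ∀ H : Subgroup G, (H : Set G) ⊆ U → H = ⊥)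
    (a : ℕ → G) (ha : Function.Injective a) (hp : IsFOmegaCauchyProductive a) : False := by
  classical
  have hzex : ∀ n : ℕ, ∃ w : ℤ, (¬ ∀ v : ℤ, a n ^ v ∈ U) → a n ^ w ∉ U := by
    intro n
    by_cases h : ∀ v : ℤ, a n ^ v ∈ U
    · exact ⟨0, fun hc => absurd h hc⟩
    · push_neg at h
      obtain ⟨w, hw⟩ := h
      exact ⟨w, fun _ => hw⟩
  choose z hzspec using hzex
  obtain ⟨k, hk⟩ := hp z U hU
  have key : ∀ n : ℕ, k ≤ n → a (n + 1) ^ z (n + 1) ∈ U := by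
    intro n hn
    have h2 : (((List.range (n + 1)).map (fun i => a i ^ z i)).prod)⁻¹ *
        ((List.range (n + 1 + 1)).map (fun i => a i ^ z i)).prod ∈ U :=
      hk n (n + 1) hn (by omega)
    rw [prod_range_succ_aux, inv_mul_cancel_left] at h2
    exact h2
  have key2 : ∀ n : ℕ, k ≤ n → a (n + 1) = 1 := by
    intro n hn
    by_cases h : ∀ v : ℤ, a (n + 1) ^ v ∈ U
    · have hsub : ((Subgroup.zpowers (a (n + 1)) : Subgroup G) : Set G) ⊆ U := by
        intro x hx
        obtain ⟨w, rfl⟩ := Subgroup.mem_zpowers_iff.mp hx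
        exact h w
      exact Subgroup.zpowers_eq_bot.mp (hns _ hsub)
    · exact absurd (key n hn) (hzspec (n + 1) h)
  have e1 := key2 k le_rfl
  have e2 := key2 (k + 1) (by omega)
  have := ha (e1.trans e2.symm)
  omega

/-- The key combinatorial lemma: a product over a list of elements lying in the members of
a "rapidly shrinking" chain, with pairwise distinct indices, all at least `N + 1`, lies in
the `N`-th member of the chain. -/
private lemma key_prod {G : Type*} [Group G]
    (V : ℕ → Set G) (hone : ∀ n, (1 : G) ∈ V n)
    (htriple : ∀ n, ∀ p ∈ V (n + 1), ∀ q ∈ V (n + 1), ∀ r ∈ V (n + 1), p * q * r ∈ V n)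
    (g : ℕ → G) (ι : ℕ → ℕ) (hg : ∀ n, g n ∈ V (ι n)) :
    ∀ (L N : ℕ) (t : List ℕ), t.length ≤ L → (t.map ι).Nodup →
      (∀ n ∈ t, N + 1 ≤ ι n) → (t.map g).prod ∈ V N := by
  classical
  have hanti : ∀ {m n : ℕ}, m ≤ n → V n ⊆ V m := by
    have h1 : ∀ n, V (n + 1) ⊆ V n := fun n x hx => by
      simpa using htriple n x hx 1 (hone _) 1 (hone _)
    intro m n h
    induction h with
    | refl => exact fun _ hx => hx
    | step h ih => exact fun x hx => ih (h1 _ hx)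
  intro L
  induction L with
  | zero =>
    intro N t ht _ _
    have : t = [] := List.length_eq_zero_iff.mp (Nat.le_zero.mp ht)
    subst this
    simpa using hone N
  | succ L ih =>
    intro N t htL hnd hge
    rcases eq_or_ne t [] with rfl | hne
    · simpa using hone N
    · have hfne : t.toFinset.Nonempty := by
        obtain ⟨x, hx⟩ := List.exists_mem_of_ne_nil t hne
        exact ⟨x, List.mem_toFinset.mpr hx⟩
      obtain ⟨n₀, hn₀mem, hn₀min⟩ := t.toFinset.exists_min_image ι hfne
      rw [List.mem_toFinset] at hn₀mem
      obtain ⟨t₁, t₂, rfl⟩ := List.append_of_mem hn₀mem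
      have hlen1 : t₁.length ≤ L := by
        have := htL
        simp only [List.length_append, List.length_cons] at this
        omega
      have hlen2 : t₂.length ≤ L := by
        have := htL
        simp only [List.length_append, List.length_cons] at this
        omega
      rw [List.map_append, List.map_cons] at hnd
      have hnd1 : (t₁.map ι).Nodup := (List.nodup_append.mp hnd).1
      have hnd2 : (t₂.map ι).Nodup := (List.nodup_cons.mp (List.nodup_append.mp hnd).2.1).2
      have hdisj : ∀ x ∈ t₁.map ι, x ≠ ι n₀ := by
        intro x hx hxe
        exact (List.nodup_append'.mp hnd).2.2 hx (hxe ▸ List.mem_cons_self)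
      have hn₀nin2 : ι n₀ ∉ t₂.map ι := (List.nodup_cons.mp (List.nodup_append.mp hnd).2.1).1
      have hMge : N + 1 ≤ ι n₀ := hge n₀ (by simp)
      obtain ⟨M, hM⟩ : ∃ M, ι n₀ = M + 1 := ⟨ι n₀ - 1, by omega⟩
      have hge1 : ∀ n ∈ t₁, (M + 1) + 1 ≤ ι n := by
        intro n hn
        have h1 : ι n₀ ≤ ι n := hn₀min n (List.mem_toFinset.mpr (by simp [hn]))
        have h2 : ι n ≠ ι n₀ := hdisj (ι n) (List.mem_map_of_mem (f := ι) hn)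
        omega
      have hge2 : ∀ n ∈ t₂, (M + 1) + 1 ≤ ι n := by
        intro n hn
        have h1 : ι n₀ ≤ ι n := hn₀min n (List.mem_toFinset.mpr (by simp [hn]))
        have h2 : ι n ≠ ι n₀ := fun h => hn₀nin2 (h ▸ List.mem_map_of_mem (f := ι) hn)
        omega
      have hp1 : (t₁.map g).prod ∈ V (M + 1) := ih (M + 1) t₁ hlen1 hnd1 hge1
      have hp2 : (t₂.map g).prod ∈ V (M + 1) := ih (M + 1) t₂ hlen2 hnd2 hge2
      have hmid : g n₀ ∈ V (M + 1) := hM ▸ hg n₀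
      have := htriple M _ hp1 _ hmid _ hp2
      rw [List.map_append, List.prod_append, List.map_cons, List.prod_cons, ← mul_assoc]
      exact hanti (by omega) this

/-- A metrizable topological group `G` is NSS (some neighborhood of the identity
contains no nontrivial subgroup) iff it contains no `f_ω`-Cauchy productive sequence,
iff it contains no unconditionally `f_ω`-Cauchy productive sequence. -/
theorem stmt11 {G : Type*} [Group G] [TopologicalSpace G] [IsTopologicalGroup G] [T2Space G]
    [TopologicalSpace.MetrizableSpace G] :
    ((∃ U ∈ nhds (1 : G), ∀ H : Subgroup G, (H : Set G) ⊆ U → H = ⊥) ↔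
      ¬ ∃ a : ℕ → G, Function.Injective a ∧ IsFOmegaCauchyProductive a) ∧
    ((∃ U ∈ nhds (1 : G), ∀ H : Subgroup G, (H : Set G) ⊆ U → H = ⊥) ↔
      ¬ ∃ a : ℕ → G, Function.Injective a ∧
        ∀ φ : ℕ → ℕ, Function.Bijective φ → IsFOmegaCauchyProductive (fun n => a (φ n))) := by
  classical
  have hA : (∃ U ∈ nhds (1 : G), ∀ H : Subgroup G, (H : Set G) ⊆ U → H = ⊥) →
      ¬ ∃ a : ℕ → G, Function.Injective a ∧ IsFOmegaCauchyProductive a := by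
    rintro ⟨U, hU, hns⟩ ⟨a, ha, hp⟩
    exact nss_no_prod U hU hns a ha hp
  have hB : (¬ ∃ U ∈ nhds (1 : G), ∀ H : Subgroup G, (H : Set G) ⊆ U → H = ⊥) →
      ∃ a : ℕ → G, Function.Injective a ∧
        ∀ φ : ℕ → ℕ, Function.Bijective φ →
          IsFOmegaCauchyProductive (fun n => a (φ n)) := by
    intro hnss
    push_neg at hnss
    -- a countable antitone neighborhood basis at 1
    letI := TopologicalSpace.metrizableSpaceMetric G
    obtain ⟨B, hBbasis⟩ := (nhds (1 : G)).exists_antitone_basis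
    have hB0 : B 0 ∈ nhds (1 : G) := hBbasis.toHasBasis.mem_of_mem trivial
    -- the shrinking chain of symmetric neighborhoods
    have step : ∀ (n : ℕ) (W : Set G), W ∈ nhds (1 : G) →
        ∃ W' : Set G, (W' ∈ nhds (1 : G) ∧ W' ⊆ B n ∧ W'⁻¹ = W') ∧
          ∀ p ∈ W', ∀ q ∈ W', ∀ r ∈ W', p * q * r ∈ W := by
      intro n W hW
      obtain ⟨V₁, hV₁, h4⟩ := exists_nhds_one_split4 hW
      have hBn : B n ∈ nhds (1 : G) := hBbasis.toHasBasis.mem_of_mem trivial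
      refine ⟨(V₁ ∩ V₁⁻¹) ∩ (B n ∩ (B n)⁻¹), ⟨?_, ?_, ?_⟩, ?_⟩
      · exact Filter.inter_mem (Filter.inter_mem hV₁ (inv_mem_nhds_one G hV₁))
          (Filter.inter_mem hBn (inv_mem_nhds_one G hBn))
      · exact fun x hx => hx.2.1
      · ext x
        simp only [Set.mem_inv, Set.mem_inter_iff, inv_inv]
        tauto
      · intro p hp q hq r hr
        have := h4 hp.1.1 hq.1.1 hr.1.1 (mem_of_mem_nhds hV₁)
        simpa using this
    choose! st hst1 hst2 using step
    set V : ℕ → Set G := fun n => Nat.rec (B 0 ∩ (B 0)⁻¹) (fun n Wn => st (n + 1) Wn) n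
      with hVdef
    have hVsucc : ∀ n, V (n + 1) = st (n + 1) (V n) := fun n => rfl
    have hV0 : V 0 = B 0 ∩ (B 0)⁻¹ := rfl
    have hVmem : ∀ n, V n ∈ nhds (1 : G) := by
      intro n
      induction n with
      | zero => rw [hV0]; exact Filter.inter_mem hB0 (inv_mem_nhds_one G hB0)
      | succ n ih => rw [hVsucc]; exact (hst1 (n + 1) (V n) ih).1
    have hVB : ∀ n, V n ⊆ B n := by
      intro n
      cases n with
      | zero => rw [hV0]; exact fun x hx => hx.1
      | succ n => rw [hVsucc]; exact (hst1 (n + 1) (V n) (hVmem n)).2.1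
    have hVsym : ∀ n, (V n)⁻¹ = V n := by
      intro n
      cases n with
      | zero =>
        rw [hV0]; ext x
        simp only [Set.mem_inv, Set.mem_inter_iff, inv_inv]
        tauto
      | succ n => rw [hVsucc]; exact (hst1 (n + 1) (V n) (hVmem n)).2.2
    have hVtriple : ∀ n, ∀ p ∈ V (n + 1), ∀ q ∈ V (n + 1), ∀ r ∈ V (n + 1), p * q * r ∈ V n := by
      intro n
      rw [hVsucc]
      exact hst2 (n + 1) (V n) (hVmem n)
    have hone : ∀ n, (1 : G) ∈ V n := fun n => mem_of_mem_nhds (hVmem n)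
    have hVbasis : ∀ U ∈ nhds (1 : G), ∃ n, V n ⊆ U := by
      intro U hU
      obtain ⟨n, -, hn⟩ := hBbasis.toHasBasis.mem_iff.mp hU
      exact ⟨n, (hVB n).trans hn⟩
    -- picking the sequence
    have pick : ∀ (n : ℕ) (l : List G), ∃ x : G, x ∉ l ∧ x ≠ 1 ∧ ∀ w : ℤ, x ^ w ∈ V n := by
      intro n l
      set C : Set G := {y | y ∈ l ∧ y ≠ 1} with hC
      have hCfin : C.Finite := l.finite_toSet.subset fun y hy => hy.1
      have hW : V n ∩ Cᶜ ∈ nhds (1 : G) :=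
        Filter.inter_mem (hVmem n)
          (hCfin.isClosed.isOpen_compl.mem_nhds (by simp [hC]))
      obtain ⟨H, hHsub, hHne⟩ := hnss _ hW
      obtain ⟨⟨x, hxH⟩, hx1⟩ := Subgroup.ne_bot_iff_exists_ne_one.mp hHne
      have hxne : x ≠ 1 := fun h => hx1 (Subtype.ext h)
      refine ⟨x, ?_, hxne, ?_⟩
      · intro hxl
        exact (hHsub hxH).2 ⟨hxl, hxne⟩
      · intro w
        exact (hHsub (Subgroup.zpow_mem H hxH w)).1
    choose pk hpk1 hpk2 hpk3 using pick
    set L : ℕ → List G := fun n => Nat.rec [] (fun n ln => ln ++ [pk n ln]) n with hLdef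
    set a : ℕ → G := fun n => pk n (L n) with ha
    have hLsucc : ∀ n, L (n + 1) = L n ++ [a n] := fun n => rfl
    have hLmono : ∀ {m n : ℕ}, m ≤ n → ∀ x ∈ L m, x ∈ L n := by
      intro m n h
      induction h with
      | refl => exact fun x hx => hx
      | step h ih =>
        intro x hx
        rw [hLsucc]
        exact List.mem_append.mpr (Or.inl (ih x hx))
    have haL : ∀ n, a n ∈ L (n + 1) := by
      intro n
      rw [hLsucc]
      exact List.mem_append.mpr (Or.inr (by simp))
    have hainj : Function.Injective a := by
      have hlt : ∀ m n : ℕ, m < n → a m ≠ a n := by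
        intro m n hmn h
        have h1 : a m ∈ L n := hLmono hmn (a m) (haL m)
        have h2 : a n ∉ L n := hpk1 n (L n)
        exact h2 (h ▸ h1)
      intro m n h
      rcases lt_trichotomy m n with h' | h' | h'
      · exact absurd h (hlt m n h')
      · exact h'
      · exact absurd h.symm (hlt n m h')
    have hpow : ∀ (n : ℕ) (w : ℤ), a n ^ w ∈ V n := fun n w => hpk3 n (L n) w
    refine ⟨a, hainj, ?_⟩
    intro φ hφ z U hU
    obtain ⟨N, hN⟩ := hVbasis U hU
    have hfin : {n : ℕ | φ n ≤ N}.Finite := by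
      have : {n : ℕ | φ n ≤ N} = φ ⁻¹' Set.Iic N := rfl
      rw [this]
      exact Set.Finite.preimage hφ.1.injOn (Set.finite_Iic N)
    obtain ⟨k, hk⟩ : ∃ k : ℕ, ∀ n, k ≤ n → N + 1 ≤ φ n := by
      obtain ⟨b, hb⟩ := hfin.bddAbove
      refine ⟨b + 1, fun n hn => ?_⟩
      by_contra hc
      have : n ∈ {n : ℕ | φ n ≤ N} := by simp only [Set.mem_setOf_eq]; omega
      have := hb this
      omega
    refine ⟨k, ?_⟩
    have main : ∀ l m : ℕ, k ≤ l → l ≤ m →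
        (((List.range (l + 1)).map (fun n => a (φ n) ^ z n)).prod)⁻¹ *
          ((List.range (m + 1)).map (fun n => a (φ n) ^ z n)).prod ∈ V N := by
      intro l m hl hlm
      have hsplit : List.range (m + 1) =
          List.range (l + 1) ++ (List.range (m - l)).map ((l + 1) + ·) := by
        rw [← List.range_add]
        congr 1
        omega
      rw [hsplit, List.map_append, List.prod_append, inv_mul_cancel_left, List.map_map]
      have := key_prod V hone hVtriple (fun n => a (φ n) ^ z n) φ
        (fun n => hpow (φ n) (z n)) ((List.range (m - l)).map ((l + 1) + ·)).length N
        ((List.range (m - l)).map ((l + 1) + ·)) le_rfl ?_ ?_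
      · rw [List.map_map] at this
        exact this
      · rw [List.map_map]
        exact (List.nodup_range (n := m - l)).map (hφ.1.comp (add_right_injective (l + 1)))
      · intro n hn
        simp only [List.mem_map, List.mem_range] at hn
        obtain ⟨j, hj, rfl⟩ := hn
        exact hk _ (by omega)
    intro l m hl hm
    rcases le_total l m with h | h
    · exact hN (main l m hl h)
    · have h1 := main m l hm h
      have h2 : (((List.range (l + 1)).map (fun n => a (φ n) ^ z n)).prod)⁻¹ *
          ((List.range (m + 1)).map (fun n => a (φ n) ^ z n)).prod =
          ((((List.range (m + 1)).map (fun n => a (φ n) ^ z n)).prod)⁻¹ *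
            ((List.range (l + 1)).map (fun n => a (φ n) ^ z n)).prod)⁻¹ := by
        rw [mul_inv_rev, inv_inv]
      have h3 : (((List.range (m + 1)).map (fun n => a (φ n) ^ z n)).prod⁻¹ *
          ((List.range (l + 1)).map (fun n => a (φ n) ^ z n)).prod)⁻¹ ∈ V N := by
        rw [← hVsym N]
        exact Set.inv_mem_inv.mpr h1
      exact hN (h2 ▸ h3)
  refine ⟨⟨hA, ?_⟩, ⟨?_, ?_⟩⟩
  · intro h
    by_contra hnss
    obtain ⟨a, hinj, hall⟩ := hB hnss
    exact h ⟨a, hinj, hall id Function.bijective_id⟩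
  · rintro hP ⟨a, hinj, hall⟩
    exact hA hP ⟨a, hinj, hall id Function.bijective_id⟩
  · intro h
    by_contra hnss
    exact h (hB hnss)
end

section
/- Let G be a topological group with a linear topology (a base at the identity consisting of open subgroups). For a faithfully indexed sequence A = {a_n} in G, the following are equivalent: (i) A converges to the identity; (ii) A is f-Cauchy productive for some weight function f; (iii) A is f-Cauchy productive for every weight function f; (iv) A is unconditionally f_ω-Cauchy productive. -/
/-- `A` is `f`-Cauchy productive for a weight function `f : ℕ → ℕ∞`:
for every `z : ℕ → ℤ` with `|z n| ≤ f n` (no restriction when `f n = ⊤ = ω`),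
the partial products of `{a_n ^ z n}` are left Cauchy. -/
def IsFCauchyProductive {G : Type*} [Group G] [TopologicalSpace G]
    (a : ℕ → G) (f : ℕ → ℕ∞) : Prop :=
  ∀ z : ℕ → ℤ, (∀ n, ((z n).natAbs : ℕ∞) ≤ f n) →
    IsLeftCauchy (fun m => ((List.range (m + 1)).map (fun n => a n ^ z n)).prod)

lemma fwd_aux {G : Type*} [Group G] [TopologicalSpace G] [IsTopologicalGroup G]
    (hlin : ∀ V ∈ nhds (1 : G), ∃ H : Subgroup G, IsOpen (H : Set G) ∧ (H : Set G) ⊆ V)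
    (b : ℕ → G) (hb : Filter.Tendsto b Filter.atTop (nhds (1 : G))) (f : ℕ → ℕ∞) :
    IsFCauchyProductive b f := by
  intro z _ U hU
  obtain ⟨H, Hopen, HU⟩ := hlin U hU
  have hmem : (H : Set G) ∈ nhds (1 : G) := Hopen.mem_nhds H.one_mem
  obtain ⟨k, hk⟩ := (Filter.tendsto_atTop'.mp hb) _ hmem
  set P : ℕ → G := fun m => ((List.range (m + 1)).map (fun n => b n ^ z n)).prod with hP
  refine ⟨k, ?_⟩
  have key : ∀ l, k ≤ l → (P k)⁻¹ * P l ∈ H := by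
    intro l hl
    induction l with
    | zero =>
        have hk0 : k = 0 := Nat.le_zero.mp hl
        subst hk0
        simpa using H.one_mem
    | succ n ih =>
        rcases Nat.lt_or_ge k (n + 1) with h | h
        · have hkn : k ≤ n := Nat.lt_succ_iff.mp h
          have hstep : P (n + 1) = P n * b (n + 1) ^ z (n + 1) := by
            simp [hP, List.range_succ]
          rw [hstep, ← mul_assoc]
          exact H.mul_mem (ih hkn) (H.zpow_mem (hk (n + 1) (by omega)) _)
        · have : k = n + 1 := le_antisymm hl h
          subst this
          simpa using H.one_mem
  intro l m hl hm
  have heq : (P l)⁻¹ * P m = ((P k)⁻¹ * P l)⁻¹ * ((P k)⁻¹ * P m) := by group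
  rw [heq]
  exact HU (H.mul_mem (H.inv_mem (key l hl)) (key m hm))

lemma bwd_aux {G : Type*} [Group G] [TopologicalSpace G] [IsTopologicalGroup G]
    (a : ℕ → G)
    (h : IsLeftCauchy (fun m => ((List.range (m + 1)).map (fun n => a n ^ (1 : ℤ))).prod)) :
    Filter.Tendsto a Filter.atTop (nhds (1 : G)) := by
  rw [Filter.tendsto_atTop']
  intro U hU
  obtain ⟨k, hk⟩ := h U hU
  refine ⟨k + 1, fun n hn => ?_⟩
  obtain ⟨l, rfl⟩ : ∃ l, n = l + 1 := ⟨n - 1, by omega⟩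
  have hstep : ((List.range (l + 1 + 1)).map (fun n => a n ^ (1 : ℤ))).prod
      = ((List.range (l + 1)).map (fun n => a n ^ (1 : ℤ))).prod * a (l + 1) ^ (1 : ℤ) := by
    rw [List.range_succ, List.map_append, List.prod_append]; simp
  have := hk l (l + 1) (by omega) (by omega)
  beta_reduce at this
  rw [hstep, inv_mul_cancel_left, zpow_one] at this
  exact this

/-- For a topological group with a linear topology (a neighborhood base at the identity
consisting of open subgroups) and a faithfully indexed sequence `A = {a_n}`, the
following are equivalent: (i) `A` converges to the identity; (ii) `A` is `f`-Cauchy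
productive for some weight function `f`; (iii) `A` is `f`-Cauchy productive for every
weight function `f`; (iv) `A` is unconditionally `f_ω`-Cauchy productive. -/
theorem stmt12 {G : Type*} [Group G] [TopologicalSpace G] [IsTopologicalGroup G]
    (hlin : ∀ V ∈ nhds (1 : G), ∃ H : Subgroup G, IsOpen (H : Set G) ∧ (H : Set G) ⊆ V)
    (a : ℕ → G) (ha : Function.Injective a) :
    (Filter.Tendsto a Filter.atTop (nhds (1 : G)) ↔
      ∃ f : ℕ → ℕ∞, (∀ n, 1 ≤ f n) ∧ IsFCauchyProductive a f) ∧
    (Filter.Tendsto a Filter.atTop (nhds (1 : G)) ↔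
      ∀ f : ℕ → ℕ∞, (∀ n, 1 ≤ f n) → IsFCauchyProductive a f) ∧
    (Filter.Tendsto a Filter.atTop (nhds (1 : G)) ↔
      ∀ φ : ℕ → ℕ, Function.Bijective φ →
        IsFCauchyProductive (fun n => a (φ n)) (fun _ => (⊤ : ℕ∞))) := by
  have fwd : ∀ (b : ℕ → G), Filter.Tendsto b Filter.atTop (nhds (1 : G)) →
      ∀ f : ℕ → ℕ∞, IsFCauchyProductive b f := fun b hb f => fwd_aux hlin b hb f
  refine ⟨⟨fun ht => ⟨fun _ => 1, fun _ => le_refl _, fwd a ht _⟩, ?_⟩,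
    ⟨fun ht f _ => fwd a ht f, ?_⟩, ⟨fun ht φ hφ => ?_, fun h => ?_⟩⟩
  · rintro ⟨f, hf1, hf⟩
    exact bwd_aux a (hf (fun _ => 1) (fun n => by simpa using hf1 n))
  · intro h
    exact bwd_aux a ((h (fun _ => 1) (fun _ => le_refl _)) (fun _ => 1)
      (fun n => by simp))
  · have hφt : Filter.Tendsto φ Filter.atTop Filter.atTop := by
      rw [← Nat.cofinite_eq_atTop]
      exact hφ.injective.tendsto_cofinite
    exact fwd _ (ht.comp hφt) _
  · exact bwd_aux a ((h id Function.bijective_id) (fun _ => 1) (fun _ => le_top))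
end

section
/- A linear sequentially Weil complete topological group contains an unconditionally f_ω-productive sequence if and only if it contains a nontrivial convergent sequence. -/
open Filter

noncomputable def seqAux {G : Type*} [DecidableEq G] (c : ℕ → G)
    (next : ℕ → Finset G → ℕ) : ℕ → ℕ × Finset G
  | 0 => (next 0 ∅, {c (next 0 ∅)})
  | k + 1 =>
      let p := seqAux c next k
      (next p.1 p.2, insert (c (next p.1 p.2)) p.2)

lemma existsInjTendstoOne {G : Type*} [Group G] [TopologicalSpace G] [T1Space G]
    (c : ℕ → G) (hc : Tendsto c atTop (nhds 1))
    (hne : ∀ N : ℕ, ∃ n ≥ N, c n ≠ 1) :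
    ∃ a : ℕ → G, Function.Injective a ∧ Tendsto a atTop (nhds 1) := by
  classical
  have key : ∀ (p : ℕ) (F : Finset G), ∃ m, p < m ∧ c m ≠ 1 ∧ c m ∉ F := by
    intro p F
    have hcl : IsClosed (↑(F.erase 1) : Set G) := (F.erase 1).finite_toSet.isClosed
    have h1 : (↑(F.erase 1) : Set G)ᶜ ∈ nhds (1 : G) := by
      refine hcl.isOpen_compl.mem_nhds ?_
      simp [Finset.mem_erase]
    have h2 := hc h1
    rw [Filter.mem_map, Filter.mem_atTop_sets] at h2
    obtain ⟨M, hM⟩ := h2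
    obtain ⟨n, hn, hn1⟩ := hne (max (p + 1) M)
    have hn' : p < n := lt_of_lt_of_le (Nat.lt_succ_self p) (le_trans (le_max_left _ _) hn)
    refine ⟨n, hn', hn1, fun hmem => ?_⟩
    exact hM n (le_trans (le_max_right _ _) hn) (by simp [Finset.mem_erase, hn1, hmem])
  choose next hlt hne1 hnotmem using key
  set s : ℕ → ℕ × Finset G := seqAux c next with hs
  set a : ℕ → G := fun k => c ((s k).1) with ha
  have hsucc : ∀ k, s (k + 1) = (next (s k).1 (s k).2, insert (c (next (s k).1 (s k).2)) (s k).2) := by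
    intro k; rfl
  have hmono : StrictMono fun k => (s k).1 := by
    apply strictMono_nat_of_lt_succ
    intro k
    rw [hsucc k]
    exact hlt _ _
  have hmem : ∀ k, a k ∈ (s k).2 := by
    intro k
    cases k with
    | zero => simp [ha, hs, seqAux]
    | succ k => rw [ha, hsucc k]; exact Finset.mem_insert_self _ _
  have hsub0 : ∀ k, (s k).2 ⊆ (s (k + 1)).2 := fun k => by
    rw [hsucc k]; exact Finset.subset_insert _ _
  have hsub : ∀ j k, j ≤ k → (s j).2 ⊆ (s k).2 := by
    intro j k hjk
    induction k, hjk using Nat.le_induction with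
    | base => exact subset_rfl
    | succ k hk ih => exact ih.trans (hsub0 k)
  have hnot : ∀ k, a (k + 1) ∉ (s k).2 := by
    intro k
    show c (s (k + 1)).1 ∉ (s k).2
    rw [hsucc k]
    exact hnotmem _ _
  have hlt' : ∀ j k, j < k → a j ≠ a k := by
    intro j k hjk
    obtain ⟨k', rfl⟩ : ∃ k', k = k' + 1 := ⟨k - 1, by omega⟩
    intro h
    exact hnot k' (h ▸ hsub j k' (by omega) (hmem j))
  refine ⟨a, ?_, ?_⟩
  · intro j k h
    by_contra hne'
    rcases lt_or_gt_of_ne hne' with h' | h'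
    · exact hlt' j k h' h
    · exact hlt' k j h' h.symm
  · exact hc.comp hmono.tendsto_atTop

lemma prodTendsto {G : Type*} [Group G] [TopologicalSpace G] [IsTopologicalGroup G]
    (hlin : ∀ V ∈ nhds (1 : G), ∃ H : Subgroup G, IsOpen (H : Set G) ∧ (H : Set G) ⊆ V)
    (hcomp : ∀ u : ℕ → G, IsLeftCauchy u → ∃ x : G, Tendsto u atTop (nhds x))
    (a : ℕ → G) (ha : Tendsto a atTop (nhds 1))
    (φ : ℕ → ℕ) (hφ : Function.Bijective φ) (z : ℕ → ℤ) :
    ∃ x : G, Tendsto (fun m => ((List.range (m + 1)).map (fun n => a (φ n) ^ z n)).prod)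
      atTop (nhds x) := by
  set f : ℕ → G := fun n => a (φ n) ^ z n with hf
  set P : ℕ → G := fun m => ((List.range (m + 1)).map f).prod with hP
  apply hcomp
  intro U hU
  obtain ⟨H, hHo, hHU⟩ := hlin U hU
  have hHn : (H : Set G) ∈ nhds (1 : G) := hHo.mem_nhds H.one_mem
  have h1 := ha hHn
  rw [Filter.mem_map, Filter.mem_atTop_sets] at h1
  obtain ⟨N, hN⟩ := h1
  have hφt : Tendsto φ atTop atTop := by
    rw [← Nat.cofinite_eq_atTop]
    exact hφ.1.tendsto_cofinite
  obtain ⟨k, hk⟩ := Filter.eventually_atTop.mp (hφt.eventually_ge_atTop N)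
  have keymem : ∀ l m, k ≤ l → l ≤ m → (P l)⁻¹ * P m ∈ H := by
    intro l m hl hlm
    have hdec : P m = P l * ((List.range (m - l)).map fun i => f (l + 1 + i)).prod := by
      show ((List.range (m + 1)).map f).prod = _
      have h : m + 1 = (l + 1) + (m - l) := by omega
      rw [h, List.range_add, List.map_append, List.prod_append, List.map_map]
      rfl
    rw [hdec, inv_mul_cancel_left]
    apply Subgroup.list_prod_mem
    intro x hx
    rw [List.mem_map] at hx
    obtain ⟨i, _, rfl⟩ := hx
    exact H.zpow_mem (hN (φ (l + 1 + i)) (hk (l + 1 + i) (by omega))) _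
  refine ⟨k, fun l m hl hm => hHU ?_⟩
  rcases le_total l m with h | h
  · exact keymem l m hl h
  · have := H.inv_mem (keymem m l hm h)
    simpa [mul_inv_rev] using this

/-- A linear (base of open subgroups at the identity) sequentially Weil complete
Hausdorff topological group contains an unconditionally `f_ω`-productive sequence
(a faithfully indexed sequence `{a_n}` such that for every bijection `φ` and every
`z : ℕ → ℤ` the partial products of `{a_{φ n} ^ z n}` converge) if and only if it
contains a nontrivial convergent sequence (one which is not eventually constant). -/
theorem stmt13 {G : Type*} [Group G] [TopologicalSpace G] [IsTopologicalGroup G] [T2Space G]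
    (hlin : ∀ V ∈ nhds (1 : G), ∃ H : Subgroup G, IsOpen (H : Set G) ∧ (H : Set G) ⊆ V)
    (hcomp : ∀ u : ℕ → G, IsLeftCauchy u → ∃ x : G, Filter.Tendsto u Filter.atTop (nhds x)) :
    (∃ a : ℕ → G, Function.Injective a ∧
      ∀ φ : ℕ → ℕ, Function.Bijective φ → ∀ z : ℕ → ℤ,
        ∃ x : G, Filter.Tendsto
          (fun m => ((List.range (m + 1)).map (fun n => a (φ n) ^ z n)).prod)
          Filter.atTop (nhds x)) ↔
    (∃ (u : ℕ → G) (x : G), Filter.Tendsto u Filter.atTop (nhds x) ∧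
      ¬ ∃ N : ℕ, ∀ n ≥ N, u n = u N) := by
  constructor
  · rintro ⟨a, hinj, hprod⟩
    obtain ⟨x, hx⟩ := hprod id Function.bijective_id (fun _ => (1 : ℤ))
    simp only [id, zpow_one] at hx
    set p : ℕ → G := fun m => ((List.range (m + 1)).map a).prod with hp
    refine ⟨p, x, hx, ?_⟩
    rintro ⟨N, hN⟩
    have hstep : ∀ m, p (m + 1) = p m * a (m + 1) := by
      intro m
      show ((List.range (m + 1 + 1)).map a).prod = _
      rw [List.range_succ, List.map_append, List.prod_append]
      simp
      rfl
    have h1 : a (N + 1) = 1 := by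
      have h := hstep N
      rw [hN (N + 1) (Nat.le_succ N)] at h
      exact left_eq_mul.mp h
    have h2 : a (N + 2) = 1 := by
      have h := hstep (N + 1)
      rw [hN (N + 2) (by omega), hN (N + 1) (by omega)] at h
      exact left_eq_mul.mp h
    have := hinj (h1.trans h2.symm)
    omega
  · rintro ⟨u, x, hu, hnc⟩
    set c : ℕ → G := fun n => (u n)⁻¹ * u (n + 1) with hcdef
    have hc : Tendsto c atTop (nhds 1) := by
      have h2 : Tendsto (fun n => u (n + 1)) atTop (nhds x) :=
        hu.comp (tendsto_add_atTop_nat 1)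
      have h3 := hu.inv.mul h2
      rwa [inv_mul_cancel] at h3
    have hne : ∀ N : ℕ, ∃ n ≥ N, c n ≠ 1 := by
      intro N
      by_contra h
      push_neg at h
      apply hnc
      refine ⟨N, fun n hn => ?_⟩
      induction n, hn using Nat.le_induction with
      | base => rfl
      | succ n hn ih =>
        have h' : (u n)⁻¹ * u (n + 1) = 1 := h n hn
        rw [inv_mul_eq_one] at h'
        rw [← h', ih]
    obtain ⟨a, hinj, haten⟩ := existsInjTendstoOne c hc hne
    exact ⟨a, hinj, fun φ hφ z => prodTendsto hlin hcomp a haten φ hφ z⟩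
end

section
/- Let H be the subgroup of bounded sequences in ℤ^ℕ (with the product topology, ℤ discrete), i.e., H = {h ∈ ℤ^ℕ : ∃ k ∈ ℕ, ∀ i, |h(i)| ≤ k}. Then for every unbounded function f : ℕ → ℕ\{0}, H contains no f-summable sequence. In particular, if {h_n} is any faithfully indexed sequence in H and f is unbounded, then there exists z : ℕ → ℤ with |z(n)| ≤ f(n) for all n such that the partial sums of {z(n)·h_n} do not converge in H. -/
noncomputable def chain15 {α : Type} (next : List α → α) : ℕ → List α
  | 0 => []
  | k + 1 => chain15 next k ++ [next (chain15 next k)]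

lemma chain15_length {α : Type} (next : List α → α) (k : ℕ) :
    (chain15 next k).length = k := by
  induction k with
  | zero => rfl
  | succ k ih => simp [chain15, ih]

lemma chain15_mem {α : Type} (next : List α → α) (k : ℕ) (q : α) :
    q ∈ chain15 next k ↔ ∃ j < k, next (chain15 next j) = q := by
  induction k with
  | zero => simp [chain15]
  | succ k ih =>
    simp only [chain15, List.mem_append, List.mem_singleton, ih]
    constructor
    · rintro (⟨j, hj, hq⟩ | rfl)
      · exact ⟨j, hj.trans (Nat.lt_succ_self k), hq⟩
      · exact ⟨k, Nat.lt_succ_self k, rfl⟩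
    · rintro ⟨j, hj, hq⟩
      rcases Nat.lt_succ_iff_lt_or_eq.mp hj with hj' | rfl
      · exact Or.inl ⟨j, hj', hq⟩
      · exact Or.inr hq.symm

lemma chain15_map_sum {α : Type} (next : List α → α) (g : α → ℕ) (k : ℕ) :
    ((chain15 next k).map g).sum = ∑ j ∈ Finset.range k, g (next (chain15 next j)) := by
  induction k with
  | zero => simp [chain15]
  | succ k ih => simp [chain15, ih, Finset.sum_range_succ]

/-- Let `H` be the subgroup of bounded sequences in `ℤ^ℕ` (product topology, `ℤ`
discrete).  For every unbounded weight function `f : ℕ → ℕ \ {0}` and every faithfully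
indexed sequence `{h_n}` of elements of `H`, there is a multiplier `z : ℕ → ℤ` with
`|z n| ≤ f n` for all `n` such that the partial sums of `{z n • h n}` do not converge
to any element of `H`; that is, `H` contains no `f`-summable sequence. -/
theorem stmt15 (H : Set (ℕ → ℤ))
    (hH : H = {h : ℕ → ℤ | ∃ k : ℕ, ∀ i : ℕ, (h i).natAbs ≤ k})
    (f : ℕ → ℕ) (hfpos : ∀ n, 0 < f n) (hfunb : ∀ k : ℕ, ∃ n, k < f n)
    (h : ℕ → (ℕ → ℤ)) (hmem : ∀ n, h n ∈ H) (hinj : Function.Injective h) :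
    ∃ z : ℕ → ℤ, (∀ n, (z n).natAbs ≤ f n) ∧
      ¬ ∃ x ∈ H, Filter.Tendsto (fun m => ∑ n ∈ Finset.range (m + 1), z n • h n)
        Filter.atTop (nhds x) := by
  classical
  subst hH
  by_cases hA : ∃ i, ∀ N, ∃ n, N ≤ n ∧ h n i ≠ 0
  · -- Case A: some coordinate is hit infinitely often
    obtain ⟨i, hi⟩ := hA
    refine ⟨fun n => if h n i ≠ 0 then 1 else 0, ?_, ?_⟩
    · intro n
      by_cases hc : h n i ≠ 0
      · simp only [if_pos hc, Int.natAbs_one]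
        exact hfpos n
      · simp [if_neg hc]
    · rintro ⟨x, -, hx⟩
      have hxi : Filter.Tendsto
          (fun m => (∑ n ∈ Finset.range (m + 1),
            (if h n i ≠ 0 then (1:ℤ) else 0) • h n) i) Filter.atTop (nhds (x i)) :=
        ((continuous_apply i).tendsto x).comp hx
      have hxi' : ∀ᶠ m in Filter.atTop,
          (∑ n ∈ Finset.range (m + 1), (if h n i ≠ 0 then (1:ℤ) else 0) • h n) i = x i := by
        rw [← Filter.tendsto_pure, ← nhds_discrete ℤ]
        exact hxi
      obtain ⟨M, hM⟩ := Filter.eventually_atTop.mp hxi'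
      obtain ⟨n, hMn, hn⟩ := hi (M + 1)
      have h1 : (∑ k ∈ Finset.range (n - 1 + 1), (if h k i ≠ 0 then (1:ℤ) else 0) • h k) i
          = x i := hM _ (by omega)
      have h2 : (∑ k ∈ Finset.range (n - 1 + 1 + 1), (if h k i ≠ 0 then (1:ℤ) else 0) • h k) i
          = x i := hM _ (by omega)
      have hn1 : n - 1 + 1 = n := by omega
      rw [hn1] at h1 h2
      rw [Finset.sum_range_succ, Pi.add_apply, h1, if_pos hn, one_smul] at h2
      exact hn (by linarith)
  · -- Case B: every coordinate is eventually zero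
    push_neg at hA
    choose Nf hNf using hA
    choose K hK using hmem
    -- we can always find a later index with large weight and nonzero h
    have hnz : ∀ B M : ℕ, ∃ n, B < n ∧ M < f n ∧ h n ≠ 0 := by
      intro B M
      by_cases hz : ∃ n0, h n0 = 0
      · obtain ⟨n0, hn0⟩ := hz
        obtain ⟨n, hn⟩ := hfunb (max M (max ((Finset.range (B + 1)).sup f) (f n0)))
        rw [max_lt_iff, max_lt_iff] at hn
        obtain ⟨h1, h2, h3⟩ := hn
        refine ⟨n, ?_, h1, ?_⟩
        · by_contra hle
          push_neg at hle
          have hm' : n ∈ Finset.range (B + 1) := Finset.mem_range.mpr (Nat.lt_succ_of_le hle)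
          have := Finset.le_sup (f := f) hm'
          omega
        · intro he
          have hnn0 : n = n0 := hinj (he.trans hn0.symm)
          subst hnn0
          omega
      · push_neg at hz
        obtain ⟨n, hn⟩ := hfunb (max M ((Finset.range (B + 1)).sup f))
        rw [max_lt_iff] at hn
        obtain ⟨h1, h2⟩ := hn
        refine ⟨n, ?_, h1, hz n⟩
        by_contra hle
        push_neg at hle
        have hm' : n ∈ Finset.range (B + 1) := Finset.mem_range.mpr (Nat.lt_succ_of_le hle)
        have := Finset.le_sup (f := f) hm'
        omega
    -- existence of the next pair in the recursive construction
    have hex : ∀ L : List (ℕ × ℕ), ∃ p : ℕ × ℕ,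
        (∀ q ∈ L, max q.1 (Nf q.2) < p.1) ∧
        ((L.map (fun q => f q.1 * K q.1)).sum + L.length + 1 ≤ f p.1) ∧
        h p.1 p.2 ≠ 0 := by
      intro L
      obtain ⟨n, hBn, hMn, hn0⟩ := hnz ((L.map (fun q => max q.1 (Nf q.2))).sum)
        ((L.map (fun q => f q.1 * K q.1)).sum + L.length)
      obtain ⟨i, hi⟩ := Function.ne_iff.mp hn0
      refine ⟨(n, i), ?_, by show _ + _ + 1 ≤ f n; omega, hi⟩
      intro q hq
      have : max q.1 (Nf q.2) ≤ (L.map (fun q => max q.1 (Nf q.2))).sum :=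
        List.single_le_sum (fun x _ => Nat.zero_le x) _ (List.mem_map_of_mem hq)
      omega
    set next : List (ℕ × ℕ) → ℕ × ℕ := fun L => Classical.choose (hex L) with hnext
    set nn : ℕ → ℕ := fun k => (next (chain15 next k)).1 with hnn
    set ii : ℕ → ℕ := fun k => (next (chain15 next k)).2 with hii
    have spec : ∀ k, (∀ q ∈ chain15 next k, max q.1 (Nf q.2) < nn k) ∧
        (((chain15 next k).map (fun q => f q.1 * K q.1)).sum + (chain15 next k).length + 1
          ≤ f (nn k)) ∧ h (nn k) (ii k) ≠ 0 :=
      fun k => Classical.choose_spec (hex (chain15 next k))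
    have hlt : ∀ j k, j < k → max (nn j) (Nf (ii j)) < nn k := by
      intro j k hjk
      exact (spec k).1 _ ((chain15_mem next k _).mpr ⟨j, hjk, rfl⟩)
    have hmono : StrictMono nn := fun j k hjk =>
      lt_of_le_of_lt (le_max_left _ _) (hlt j k hjk)
    have hfbig : ∀ k, (∑ j ∈ Finset.range k, f (nn j) * K (nn j)) + k + 1 ≤ f (nn k) := by
      intro k
      have := (spec k).2.1
      rwa [chain15_map_sum, chain15_length] at this
    have hne : ∀ k, h (nn k) (ii k) ≠ 0 := fun k => (spec k).2.2
    have hzero : ∀ j k, j < k → h (nn k) (ii j) = 0 := by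
      intro j k hjk
      exact hNf (ii j) (nn k) (le_of_lt (lt_of_le_of_lt (le_max_right _ _) (hlt j k hjk)))
    set z : ℕ → ℤ := fun m => if ∃ j, nn j = m then (f m : ℤ) else 0 with hz
    refine ⟨z, ?_, ?_⟩
    · intro m
      simp only [hz]
      split <;> simp
    · rintro ⟨x, ⟨k0, hk0⟩, hx⟩
      -- partial sums at coordinate ii k stabilize at step nn k
      have hval : ∀ k m, nn k ≤ m →
          ∑ p ∈ Finset.range (m + 1), z p * h p (ii k)
            = ∑ p ∈ Finset.range (nn k + 1), z p * h p (ii k) := by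
        intro k m hkm
        refine (Finset.sum_subset (Finset.range_subset_range.mpr (by omega)) ?_).symm
        intro p _ hp
        rw [Finset.mem_range, not_lt] at hp
        by_cases he : ∃ j, nn j = p
        · obtain ⟨j, rfl⟩ := he
          have hkj : k < j := by
            by_contra hjk
            push_neg at hjk
            have := hmono.monotone hjk
            omega
          rw [hzero k j hkj, mul_zero]
        · simp [hz, he]
      -- the stabilized value is large
      have hbig : ∀ k, k + 1 ≤ (∑ p ∈ Finset.range (nn k + 1), z p * h p (ii k)).natAbs := by
        intro k
        rw [Finset.sum_range_succ]
        set T := ∑ p ∈ Finset.range (nn k), z p * h p (ii k) with hT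
        have hzk : z (nn k) = (f (nn k) : ℤ) := if_pos ⟨k, rfl⟩
        have hlast : f (nn k) ≤ (z (nn k) * h (nn k) (ii k)).natAbs := by
          rw [hzk, Int.natAbs_mul]
          have : 1 ≤ (h (nn k) (ii k)).natAbs := by
            have := hne k
            omega
          calc f (nn k) = f (nn k) * 1 := (mul_one _).symm
            _ ≤ ((f (nn k) : ℤ)).natAbs * (h (nn k) (ii k)).natAbs := by
                rw [Int.natAbs_natCast]
                exact Nat.mul_le_mul_left _ this
        have hTle : T.natAbs ≤ ∑ j ∈ Finset.range k, f (nn j) * K (nn j) := by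
          have step1 : T.natAbs ≤ ∑ p ∈ Finset.range (nn k), (z p * h p (ii k)).natAbs :=
            nat_abs_sum_le _ _
          have step2 : ∑ p ∈ Finset.range (nn k), (z p * h p (ii k)).natAbs
              ≤ ∑ p ∈ Finset.range (nn k), (if ∃ j, nn j = p then f p * K p else 0) := by
            refine Finset.sum_le_sum fun p _ => ?_
            by_cases he : ∃ j, nn j = p
            · rw [if_pos he]
              simp only [hz, if_pos he]
              rw [Int.natAbs_mul, Int.natAbs_natCast]
              exact Nat.mul_le_mul_left _ (hK p (ii k))
            · simp [hz, he]
          have hsub : (Finset.range k).image nn ⊆ Finset.range (nn k) := by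
            intro p hp
            rw [Finset.mem_image] at hp
            obtain ⟨j, hj, rfl⟩ := hp
            exact Finset.mem_range.mpr (hmono (Finset.mem_range.mp hj))
          have h0 : ∀ p ∈ Finset.range (nn k), p ∉ (Finset.range k).image nn →
              (if ∃ j, nn j = p then f p * K p else 0) = 0 := by
            intro p hp hpim
            rw [if_neg]
            rintro ⟨j, rfl⟩
            refine hpim (Finset.mem_image.mpr ⟨j, ?_, rfl⟩)
            rw [Finset.mem_range] at hp ⊢
            by_contra hjk
            push_neg at hjk
            exact absurd (hmono.monotone hjk) (by omega)
          have step3 : ∑ p ∈ Finset.range (nn k), (if ∃ j, nn j = p then f p * K p else 0)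
              = ∑ j ∈ Finset.range k, f (nn j) * K (nn j) := by
            calc ∑ p ∈ Finset.range (nn k), (if ∃ j, nn j = p then f p * K p else 0)
                = ∑ p ∈ (Finset.range k).image nn,
                    (if ∃ j, nn j = p then f p * K p else 0) :=
                  (Finset.sum_subset hsub h0).symm
              _ = ∑ j ∈ Finset.range k, (if ∃ j', nn j' = nn j then f (nn j) * K (nn j) else 0) :=
                  Finset.sum_image (fun a _ b _ hab => hmono.injective hab)
              _ = ∑ j ∈ Finset.range k, f (nn j) * K (nn j) :=
                  Finset.sum_congr rfl (fun j _ => if_pos ⟨j, rfl⟩)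
          omega
        have habs : (z (nn k) * h (nn k) (ii k)).natAbs
            ≤ (T + z (nn k) * h (nn k) (ii k)).natAbs + T.natAbs := by
          have := Int.natAbs_sub_le (T + z (nn k) * h (nn k) (ii k)) T
          simpa using this
        have hf := hfbig k
        omega
      -- conclude: the limit x would be unbounded
      have hxi : Filter.Tendsto
          (fun m => (∑ n ∈ Finset.range (m + 1), z n • h n) (ii k0)) Filter.atTop
          (nhds (x (ii k0))) := ((continuous_apply (ii k0)).tendsto x).comp hx
      have hxi' : ∀ᶠ m in Filter.atTop,
          (∑ n ∈ Finset.range (m + 1), z n • h n) (ii k0) = x (ii k0) := by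
        rw [← Filter.tendsto_pure, ← nhds_discrete ℤ]
        exact hxi
      obtain ⟨M, hM⟩ := Filter.eventually_atTop.mp hxi'
      set m := max M (nn k0) with hm
      have e1 : (∑ n ∈ Finset.range (m + 1), z n • h n) (ii k0) = x (ii k0) :=
        hM m (le_max_left _ _)
      have e2 : (∑ n ∈ Finset.range (m + 1), z n • h n) (ii k0)
          = ∑ p ∈ Finset.range (nn k0 + 1), z p * h p (ii k0) := by
        rw [Finset.sum_apply]
        simp only [Pi.smul_apply, smul_eq_mul]
        exact hval k0 m (le_max_right _ _)
      have hb := hbig k0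
      rw [← e2, e1] at hb
      have := hk0 (ii k0)
      omega
end

section
/- Let (X, <) be a linearly ordered set and s ∈ Seq(X) a finite sequence with distinct consecutive neighbors. Then for every subsequence s' of s, the number of local extrema of s' is at most the number of local extrema of s. -/
/-- Index `i` is a local maximum of the finite sequence `(s 0, …, s k)`. -/
def IsLocMax {X : Type*} [LinearOrder X] (k : ℕ) (s : ℕ → X) (i : ℕ) : Prop :=
  i ≤ k ∧ (i ≠ 0 → s (i - 1) < s i) ∧ (i ≠ k → s (i + 1) < s i)

/-- Index `i` is a local minimum of the finite sequence `(s 0, …, s k)`. -/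
def IsLocMin {X : Type*} [LinearOrder X] (k : ℕ) (s : ℕ → X) (i : ℕ) : Prop :=
  i ≤ k ∧ (i ≠ 0 → s i < s (i - 1)) ∧ (i ≠ k → s i < s (i + 1))

/-- The set of indices of local extrema of the finite sequence `(s 0, …, s k)`. -/
def ExtSet {X : Type*} [LinearOrder X] (k : ℕ) (s : ℕ → X) : Set ℕ :=
  {i | IsLocMax k s i ∨ IsLocMin k s i}

private lemma exists_peak {X : Type*} [LinearOrder X] {k : ℕ} {s : ℕ → X}
    (hs : ∀ i : ℕ, i < k → s i ≠ s (i + 1))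
    {a b m : ℕ} (ha : a < m) (hb : m < b) (hbk : b ≤ k)
    (h1 : s a < s m) (h2 : s b < s m) :
    ∃ j, a < j ∧ j < b ∧ s (j - 1) < s j ∧ s (j + 1) < s j := by
  obtain ⟨j, hj, hmax⟩ := Finset.exists_max_image (Finset.Icc a b) s
    ⟨m, Finset.mem_Icc.mpr ⟨ha.le, hb.le⟩⟩
  rw [Finset.mem_Icc] at hj
  have hjm : s m ≤ s j := hmax m (Finset.mem_Icc.mpr ⟨ha.le, hb.le⟩)
  have hja : a < j := hj.1.lt_of_ne (by rintro rfl; exact (h1.trans_le hjm).false)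
  have hjb : j < b := lt_of_le_of_ne hj.2 (by rintro rfl; exact (h2.trans_le hjm).false)
  refine ⟨j, hja, hjb, ?_, ?_⟩
  · have hle : s (j - 1) ≤ s j := hmax (j - 1) (Finset.mem_Icc.mpr ⟨by omega, by omega⟩)
    have hne : s (j - 1) ≠ s (j - 1 + 1) := hs (j - 1) (by omega)
    rw [show j - 1 + 1 = j by omega] at hne
    exact hle.lt_of_ne hne
  · have hle : s (j + 1) ≤ s j := hmax (j + 1) (Finset.mem_Icc.mpr ⟨by omega, by omega⟩)
    have hne : s j ≠ s (j + 1) := hs j (by omega)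
    exact hle.lt_of_ne (Ne.symm hne)

private lemma exists_valley {X : Type*} [LinearOrder X] {k : ℕ} {s : ℕ → X}
    (hs : ∀ i : ℕ, i < k → s i ≠ s (i + 1))
    {a b m : ℕ} (ha : a < m) (hb : m < b) (hbk : b ≤ k)
    (h1 : s m < s a) (h2 : s m < s b) :
    ∃ j, a < j ∧ j < b ∧ s j < s (j - 1) ∧ s j < s (j + 1) := by
  obtain ⟨j, hj, hmin⟩ := Finset.exists_min_image (Finset.Icc a b) s
    ⟨m, Finset.mem_Icc.mpr ⟨ha.le, hb.le⟩⟩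
  rw [Finset.mem_Icc] at hj
  have hjm : s j ≤ s m := hmin m (Finset.mem_Icc.mpr ⟨ha.le, hb.le⟩)
  have hja : a < j := hj.1.lt_of_ne (by rintro rfl; exact ((hjm.trans_lt h1)).false)
  have hjb : j < b := lt_of_le_of_ne hj.2 (by rintro rfl; exact ((hjm.trans_lt h2)).false)
  refine ⟨j, hja, hjb, ?_, ?_⟩
  · have hle : s j ≤ s (j - 1) := hmin (j - 1) (Finset.mem_Icc.mpr ⟨by omega, by omega⟩)
    have hne : s (j - 1) ≠ s (j - 1 + 1) := hs (j - 1) (by omega)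
    rw [show j - 1 + 1 = j by omega] at hne
    exact hle.lt_of_ne (Ne.symm hne)
  · have hle : s j ≤ s (j + 1) := hmin (j + 1) (Finset.mem_Icc.mpr ⟨by omega, by omega⟩)
    have hne : s j ≠ s (j + 1) := hs j (by omega)
    exact hle.lt_of_ne hne

/-- If `s = (s 0, …, s k)` is a finite sequence with distinct consecutive neighbors in a
linearly ordered set and `s' = (s (ι 0), …, s (ι k'))` is a subsequence of `s`
(`ι` strictly increasing on `{0, …, k'}` with `ι k' ≤ k`), then the number of local
extrema of `s'` is at most the number of local extrema of `s`. -/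
theorem stmt16 {X : Type*} [LinearOrder X] (k k' : ℕ) (s : ℕ → X)
    (hs : ∀ i : ℕ, i < k → s i ≠ s (i + 1))
    (ι : ℕ → ℕ) (hι : ∀ i j : ℕ, i < j → j ≤ k' → ι i < ι j) (hιk : ι k' ≤ k) :
    (ExtSet k' (fun i => s (ι i))).ncard ≤ (ExtSet k s).ncard := by
  classical
  set s' : ℕ → X := fun i => s (ι i) with hs'def
  have hιmono : ∀ i j : ℕ, i ≤ j → j ≤ k' → ι i ≤ ι j := fun i j hij hjk => by
    rcases eq_or_lt_of_le hij with rfl | h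
    · exact le_rfl
    · exact (hι i j h hjk).le
  have hfin : (ExtSet k s).Finite := (Set.finite_Iic k).subset (by
    rintro i (⟨h, -⟩ | ⟨h, -⟩) <;> exact h)
  have h0ext : 0 ∈ ExtSet k s := by
    rcases Nat.eq_zero_or_pos k with rfl | hk
    · exact Or.inl ⟨le_rfl, fun h => absurd rfl h, fun h => absurd rfl h⟩
    · rcases lt_trichotomy (s 0) (s 1) with h | h | h
      · exact Or.inr ⟨Nat.zero_le _, fun h' => absurd rfl h', fun _ => h⟩
      · exact absurd h (hs 0 hk)
      · exact Or.inl ⟨Nat.zero_le _, fun h' => absurd rfl h', fun _ => h⟩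
  have hkext : k ∈ ExtSet k s := by
    rcases Nat.eq_zero_or_pos k with rfl | hk
    · exact h0ext
    · have hne := hs (k - 1) (by omega)
      rw [show k - 1 + 1 = k by omega] at hne
      rcases lt_trichotomy (s (k - 1)) (s k) with h | h | h
      · exact Or.inl ⟨le_rfl, fun _ => h, fun h' => absurd rfl h'⟩
      · exact absurd h hne
      · exact Or.inr ⟨le_rfl, fun _ => h, fun h' => absurd rfl h'⟩
  set P : ℕ → ℕ → Prop := fun i j =>
    ι (i - 1) < j ∧ j < ι (i + 1) ∧
      (s' (i - 1) < s' i → s (j - 1) < s j ∧ s (j + 1) < s j) ∧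
      (s' i < s' (i - 1) → s j < s (j - 1) ∧ s j < s (j + 1)) with hPdef
  have hPex : ∀ i, i ∈ ExtSet k' s' → 0 < i → i < k' → P i (sInf {j | P i j}) := by
    intro i hi h0 hik
    have ha : ι (i - 1) < ι i := hι (i - 1) i (by omega) (by omega)
    have hb : ι i < ι (i + 1) := hι i (i + 1) (by omega) (by omega)
    have hbk : ι (i + 1) ≤ k := le_trans (hιmono (i + 1) k' (by omega) le_rfl) hιk
    have hne : {j | P i j}.Nonempty := by
      rcases hi with ⟨-, h1, h2⟩ | ⟨-, h1, h2⟩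
      · obtain ⟨j, hj1, hj2, hj3, hj4⟩ := exists_peak hs ha hb hbk (h1 (by omega)) (h2 (by omega))
        exact ⟨j, hj1, hj2, fun _ => ⟨hj3, hj4⟩,
          fun h => absurd h (lt_asymm (h1 (by omega)))⟩
      · obtain ⟨j, hj1, hj2, hj3, hj4⟩ := exists_valley hs ha hb hbk (h1 (by omega)) (h2 (by omega))
        exact ⟨j, hj1, hj2, fun h => absurd (h1 (by omega)) (lt_asymm h), fun _ => ⟨hj3, hj4⟩⟩
    exact Nat.sInf_mem hne
  set f : ℕ → ℕ := fun i => if i = 0 then 0 else if i = k' then k else sInf {j | P i j}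
    with hfdef
  have hf0 : f 0 = 0 := by simp [hfdef]
  have hfk' : ∀ (h : k' ≠ 0), f k' = k := by intro h; simp [hfdef, h, Ne.symm h]
  have hfint : ∀ i, 0 < i → i < k' → f i = sInf {j | P i j} := by
    intro i h0 hik
    simp only [hfdef]
    rw [if_neg (by omega), if_neg (by omega)]
  have hbound : ∀ i, i ∈ ExtSet k' s' → 0 < i → i < k' →
      ι (i - 1) < f i ∧ f i < ι (i + 1) := by
    intro i hi h0 hik
    rw [hfint i h0 hik]
    exact ⟨(hPex i hi h0 hik).1, (hPex i hi h0 hik).2.1⟩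
  have hmem : ∀ i ∈ ExtSet k' s', i ≤ k' := by
    rintro i (⟨h, -⟩ | ⟨h, -⟩) <;> exact h
  have hmaps : ∀ i ∈ ExtSet k' s', f i ∈ ExtSet k s := by
    intro i hi
    by_cases h0 : i = 0
    · rw [h0, hf0]; exact h0ext
    by_cases hk'0 : i = k'
    · rw [hk'0, hfk' (by omega)]; exact hkext
    have hik : i < k' := lt_of_le_of_ne (hmem i hi) hk'0
    have hp := hPex i hi (by omega) hik
    rw [hfint i (by omega) hik]
    obtain ⟨hj1, hj2, hj3, hj4⟩ := hp
    have hjk : sInf {j | P i j} ≤ k :=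
      le_trans hj2.le (le_trans (hιmono (i + 1) k' (by omega) le_rfl) hιk)
    rcases hi with ⟨-, h1, -⟩ | ⟨-, h1, -⟩
    · obtain ⟨ha, hb⟩ := hj3 (h1 h0)
      exact Or.inl ⟨hjk, fun _ => ha, fun _ => hb⟩
    · obtain ⟨ha, hb⟩ := hj4 (h1 h0)
      exact Or.inr ⟨hjk, fun _ => ha, fun _ => hb⟩
  have key : ∀ i i', i ∈ ExtSet k' s' → i' ∈ ExtSet k' s' → i < i' → f i ≠ f i' := by
    intro i i' hi hi' hlt
    have hi'k : i' ≤ k' := hmem i' hi'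
    have hik : i < k' := lt_of_lt_of_le hlt hi'k
    by_cases h0 : i = 0
    · subst h0
      by_cases hk'0 : i' = k'
      · have hk1 : 0 < k := lt_of_le_of_lt (Nat.zero_le _)
          (lt_of_lt_of_le (hι 0 k' (hk'0 ▸ hlt) le_rfl) hιk)
        rw [hf0, hk'0, hfk' (by omega)]
        omega
      · have hb := hbound i' hi' (by omega) (by omega)
        rw [hf0]
        omega
    · have hib := hbound i hi (by omega) hik
      by_cases hk'0 : i' = k'
      · rw [hk'0, hfk' (by omega)]
        have : ι (i + 1) ≤ k := le_trans (hιmono (i + 1) k' (by omega) le_rfl) hιk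
        omega
      · have hi'b := hbound i' hi' (by omega) (by omega)
        by_cases hadj : i' = i + 1
        · -- adjacent: opposite types
          subst hadj
          have hp := hPex i hi (by omega) hik
          have hp' := hPex (i + 1) hi' (by omega) (by omega)
          rw [hfint i (by omega) hik, hfint (i + 1) (by omega) (by omega)]
          intro heq
          have hred : i + 1 - 1 = i := by omega
          rcases hi with ⟨-, h1, h2⟩ | ⟨-, h1, h2⟩
          · -- i is a local max of s'
            have hmax := (hp.2.2.1 (h1 (by omega))).2
            have hmin := (hp'.2.2.2 (by rw [hred]; exact h2 (by omega))).2
            rw [heq] at hmax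
            exact (hmax.trans hmin).false
          · have hmin := (hp.2.2.2 (h1 (by omega))).2
            have hmax := (hp'.2.2.1 (by rw [hred]; exact h2 (by omega))).2
            rw [heq] at hmin
            exact (hmin.trans hmax).false
        · have : ι (i + 1) ≤ ι (i' - 1) := hιmono (i + 1) (i' - 1) (by omega) (by omega)
          omega
  refine Set.ncard_le_ncard_of_injOn f hmaps ?_ hfin
  intro a ha b hb hab
  rcases lt_trichotomy a b with h | h | h
  · exact absurd hab (key a b ha hb h)
  · exact h
  · exact absurd hab.symm (key b a hb ha h)
end

section
/- Let (X, <) be a linearly ordered set and let F(X) be the free group on X. The function η : F(X) → ℕ assigning to each reduced word w the number of local extrema of the sequence of letters (ignoring exponents) occurring in the canonical representation of w is a seminorm on F(X): η(ab) ≤ η(a) + η(b) and η(a) = η(a⁻¹) for all a, b ∈ F(X). -/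
/-- The support `σ(w)` of a word `w` in the free group: the sequence of letters
`(x_1, …, x_k)` (with `x_i ≠ x_{i+1}`) appearing in the canonical representation
`w = x_1^{z_1} ⋯ x_k^{z_k}`; obtained from the reduced word of `w` by collapsing
consecutive equal letters. -/
def wordSupport {X : Type*} [LinearOrder X] (w : FreeGroup X) : List X :=
  List.destutter (· ≠ ·) ((FreeGroup.toWord w).map Prod.fst)

/-- `η w` is the number of local extrema of the support of `w` (and `0` for the
empty word). -/
noncomputable def eta {X : Type*} [LinearOrder X] (w : FreeGroup X) : ℕ :=
  if h : wordSupport w = [] then 0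
  else (ExtSet ((wordSupport w).length - 1)
    (fun i => (wordSupport w).getD i ((wordSupport w).head h))).ncard

section Auxiliary

set_option linter.unusedTactic false
set_option linter.unreachableTactic false
set_option linter.unnecessarySeqFocus false
set_option linter.unusedVariables false

section Destutter

open List

variable {X : Type*} [DecidableEq X]

private lemma destutter'_head (a : X) (l : List X) :
    ∃ t, destutter' (· ≠ ·) a l = a :: t := by
  induction l generalizing a with
  | nil => exact ⟨[], rfl⟩
  | cons b l ih =>
    rw [destutter'_cons]
    by_cases h : a ≠ b
    · simp only [if_pos h]; exact ⟨_, rfl⟩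
    · simp only [if_neg h]; exact ih a

private lemma destutter'_append_aux (P : List X) :
    ∀ (a : X) (Q : List X), ∃ T, destutter' (· ≠ ·) a (P ++ Q)
      = destutter' (· ≠ ·) a P ++ T ∧ T <:+ destutter (· ≠ ·) Q := by
  induction P with
  | nil =>
    intro a Q
    cases Q with
    | nil => exact ⟨[], by simp, suffix_rfl⟩
    | cons b Q' =>
      simp only [nil_append, destutter'_nil, destutter'_cons]
      by_cases h : a ≠ b
      · exact ⟨destutter' (· ≠ ·) b Q', by simp [h], by rw [destutter_cons']⟩
      · push_neg at h
        subst h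
        obtain ⟨t, ht⟩ := destutter'_head a Q'
        refine ⟨t, by simp [ht], ?_⟩
        rw [destutter_cons', ht]
        exact suffix_cons a t
  | cons c P' ih =>
    intro a Q
    simp only [cons_append, destutter'_cons]
    by_cases h : a ≠ c
    · obtain ⟨T, hT, hs⟩ := ih c Q
      exact ⟨T, by simp [h, hT], hs⟩
    · obtain ⟨T, hT, hs⟩ := ih a Q
      exact ⟨T, by simp [h, hT], hs⟩

private lemma destutter_append (P Q : List X) :
    ∃ T, destutter (· ≠ ·) (P ++ Q) = destutter (· ≠ ·) P ++ T
      ∧ T <:+ destutter (· ≠ ·) Q := by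
  cases P with
  | nil => exact ⟨destutter (· ≠ ·) Q, by simp, suffix_rfl⟩
  | cons a P' =>
    obtain ⟨T, hT, hs⟩ := destutter'_append_aux P' a Q
    exact ⟨T, by simpa [destutter_cons'] using hT, hs⟩

private lemma destutter_suffix_aux (P : List X) :
    ∀ (a : X) (Q : List X), destutter (· ≠ ·) Q <:+ destutter' (· ≠ ·) a (P ++ Q) := by
  induction P with
  | nil =>
    intro a Q
    cases Q with
    | nil => simp
    | cons b Q' =>
      simp only [nil_append, destutter'_cons, destutter_cons']
      by_cases h : a ≠ b
      · simp only [if_pos h]; exact (suffix_cons a _)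
      · push_neg at h; subst h; simp
  | cons c P' ih =>
    intro a Q
    simp only [cons_append, destutter'_cons]
    by_cases h : a ≠ c
    · simp only [if_pos h]; exact (ih c Q).trans (suffix_cons a _)
    · simp only [if_neg h]; exact ih a Q

private lemma destutter_suffix (P Q : List X) :
    destutter (· ≠ ·) Q <:+ destutter (· ≠ ·) (P ++ Q) := by
  cases P with
  | nil => simp
  | cons a P' => rw [cons_append, destutter_cons']; exact destutter_suffix_aux P' a Q

private lemma destutter'_concat (b : X) (l : List X) : ∀ a : X,
    destutter' (· ≠ ·) a (l ++ [b]) =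
      if (destutter' (· ≠ ·) a l).getLast? = some b then destutter' (· ≠ ·) a l
      else destutter' (· ≠ ·) a l ++ [b] := by
  induction l with
  | nil =>
    intro a
    simp only [nil_append, destutter'_singleton, destutter'_nil, getLast?_singleton]
    by_cases h : a = b
    · simp [h]
    · simp [h, Ne.symm h]
  | cons c l ih =>
    intro a
    simp only [cons_append, destutter'_cons]
    by_cases h : a ≠ c
    · simp only [if_pos h, ih c]
      obtain ⟨t, ht⟩ := destutter'_head c l
      rw [ht, getLast?_cons_cons]
      split <;> simp
    · simp only [if_neg h, ih a]

private lemma destutter_concat (b : X) (l : List X) :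
    destutter (· ≠ ·) (l ++ [b]) =
      if (destutter (· ≠ ·) l).getLast? = some b then destutter (· ≠ ·) l
      else destutter (· ≠ ·) l ++ [b] := by
  cases l with
  | nil => simp
  | cons a l' => simp only [cons_append, destutter_cons', destutter'_concat]; congr

private lemma destutter_cons_eq (a : X) (l : List X) :
    destutter (· ≠ ·) (a :: l) =
      if (destutter (· ≠ ·) l).head? = some a then destutter (· ≠ ·) l
      else a :: destutter (· ≠ ·) l := by
  cases l with
  | nil => simp
  | cons b l' =>
    rw [destutter_cons', destutter'_cons, destutter_cons']
    obtain ⟨t, ht⟩ := destutter'_head b l'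
    by_cases h : a = b
    · subst h; simp [ht]
    · simp [ht, h, Ne.symm h]

private lemma destutter_reverse (l : List X) :
    destutter (· ≠ ·) l.reverse = (destutter (· ≠ ·) l).reverse := by
  induction l with
  | nil => simp
  | cons a l ih =>
    rw [reverse_cons, destutter_concat, ih, destutter_cons_eq, getLast?_reverse]
    split <;> simp

end Destutter

section Reduce

open List FreeGroup

variable {X : Type*} [DecidableEq X]

/-- Non-cancelling adjacency for letters of a word in the free group. -/
private def NC (x y : X × Bool) : Prop := ¬(x.1 = y.1 ∧ x.2 = !y.2)

private lemma reduce_eq_self_of_chain' {L : List (X × Bool)} (h : Chain' NC L) :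
    reduce L = L := by
  induction L with
  | nil => rfl
  | cons x L ih =>
    rw [reduce.cons, ih h.tail]
    cases L with
    | nil => rfl
    | cons y L' =>
      have hxy : NC x y := (isChain_cons_cons.mp h).1
      simp only [NC] at hxy
      simp [hxy]

private lemma chain'_reduce (L : List (X × Bool)) : Chain' NC (reduce L) := by
  induction L with
  | nil => exact isChain_nil
  | cons x L ih =>
    rw [reduce.cons]
    cases h : reduce L with
    | nil => exact isChain_singleton _
    | cons y t =>
      rw [h] at ih
      by_cases hc : x.1 = y.1 ∧ x.2 = !y.2
      · show Chain' NC (if x.1 = y.1 ∧ x.2 = !y.2 then t else x :: y :: t)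
        rw [if_pos hc]; exact ih.tail
      · simp only [hc, if_neg]
        exact isChain_cons_cons.mpr ⟨hc, ih⟩

private lemma reduce_append_decomp :
    ∀ (n : ℕ) (L1 L2 : List (X × Bool)), L1.length ≤ n → Chain' NC L1 → Chain' NC L2 →
    ∃ p q, p <+: L1 ∧ q <:+ L2 ∧ reduce (L1 ++ L2) = p ++ q := by
  intro n
  induction n with
  | zero =>
    intro L1 L2 h h1 h2
    have : L1 = [] := eq_nil_of_length_eq_zero (Nat.le_zero.mp h)
    subst this
    exact ⟨[], L2, prefix_rfl, suffix_rfl, by simpa using reduce_eq_self_of_chain' h2⟩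
  | succ n ih =>
    intro L1 L2 h h1 h2
    rcases eq_nil_or_concat L1 with rfl | ⟨L1', a, rfl⟩
    · exact ⟨[], L2, prefix_rfl, suffix_rfl, by simpa using reduce_eq_self_of_chain' h2⟩
    cases L2 with
    | nil =>
      exact ⟨L1'.concat a, [], prefix_rfl, suffix_rfl,
        by simpa using reduce_eq_self_of_chain' h1⟩
    | cons y L2' =>
      by_cases hc : a.1 = y.1 ∧ a.2 = !y.2
      · -- cancellation at the junction
        have hstep : Red.Step ((L1'.concat a) ++ (y :: L2')) (L1' ++ L2') := by
          have hy : y = (a.1, !a.2) := by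
            obtain ⟨h1', h2'⟩ := hc
            cases y with
            | mk y1 y2 =>
              simp only at h1' h2'
              subst h1'
              simp [h2', Bool.not_not]
          rw [hy]
          have : (L1'.concat a) ++ ((a.1, !a.2) :: L2')
              = L1' ++ (a.1, a.2) :: (a.1, !a.2) :: L2' := by
            simp [concat_eq_append]
          rw [this]
          exact Red.Step.not
        have hred : reduce ((L1'.concat a) ++ (y :: L2')) = reduce (L1' ++ L2') :=
          reduce.Step.eq hstep
        have hlen : L1'.length ≤ n := by
          have := h
          simp only [length_concat] at this
          omega
        have hch1 : Chain' NC L1' := h1.prefix (by simp [concat_eq_append])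
        have hch2 : Chain' NC L2' := h2.tail
        obtain ⟨p, q, hp, hq, he⟩ := ih L1' L2' hlen hch1 hch2
        exact ⟨p, q, hp.trans (by simp [concat_eq_append]),
          hq.trans (suffix_cons y L2'), by rw [hred, he]⟩
      · -- no cancellation: the concatenation is already reduced
        have hch : Chain' NC ((L1'.concat a) ++ (y :: L2')) := by
          show List.IsChain NC _
          rw [isChain_append]
          refine ⟨h1, h2, ?_⟩
          intro x hx z hz
          simp only [concat_eq_append, getLast?_append, getLast?_singleton] at hx
          simp only [head?_cons] at hz
          have hx' : x = a := by simpa using hx.symm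
          have hz' : z = y := by simpa using hz.symm
          subst hx'; subst hz'
          exact hc
        exact ⟨L1'.concat a, y :: L2', prefix_rfl, suffix_rfl,
          reduce_eq_self_of_chain' hch⟩

private lemma toWord_mul_decomp (a b : FreeGroup X) :
    ∃ p q, p <+: toWord a ∧ q <:+ toWord b ∧ toWord (a * b) = p ++ q := by
  have hab : a * b = FreeGroup.mk (toWord a ++ toWord b) := by
    rw [← FreeGroup.mul_mk, FreeGroup.mk_toWord, FreeGroup.mk_toWord]
  have h1 : Chain' NC (toWord a) := by
    have := chain'_reduce (X := X) (toWord a)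
    rwa [FreeGroup.reduce_toWord] at this
  have h2 : Chain' NC (toWord b) := by
    have := chain'_reduce (X := X) (toWord b)
    rwa [FreeGroup.reduce_toWord] at this
  obtain ⟨p, q, hp, hq, he⟩ :=
    reduce_append_decomp (toWord a).length (toWord a) (toWord b) le_rfl h1 h2
  exact ⟨p, q, hp, hq, by rw [hab, FreeGroup.toWord_mk, he]⟩

end Reduce

section Counting

open List

variable {X : Type*} [LinearOrder X]

variable {X : Type*} [LinearOrder X]

private lemma extSet_subset (k : ℕ) (s : ℕ → X) : ExtSet k s ⊆ Set.Iic k := by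
  rintro i (h | h) <;> exact h.1

private lemma extSet_finite (k : ℕ) (s : ℕ → X) : (ExtSet k s).Finite :=
  (Set.finite_Iic k).subset (extSet_subset k s)

private lemma isLocMax_congr {k : ℕ} {s s' : ℕ → X} (h : ∀ i ≤ k, s i = s' i)
    {i : ℕ} (hm : IsLocMax k s i) : IsLocMax k s' i := by
  obtain ⟨h1, h2, h3⟩ := hm
  refine ⟨h1, fun hi => ?_, fun hi => ?_⟩
  · rw [← h i h1, ← h (i-1) (by omega)]; exact h2 hi
  · rw [← h i h1, ← h (i+1) (by omega)]; exact h3 hi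

private lemma isLocMin_congr {k : ℕ} {s s' : ℕ → X} (h : ∀ i ≤ k, s i = s' i)
    {i : ℕ} (hm : IsLocMin k s i) : IsLocMin k s' i := by
  obtain ⟨h1, h2, h3⟩ := hm
  refine ⟨h1, fun hi => ?_, fun hi => ?_⟩
  · rw [← h i h1, ← h (i-1) (by omega)]; exact h2 hi
  · rw [← h i h1, ← h (i+1) (by omega)]; exact h3 hi

private lemma extSet_congr {k : ℕ} {s s' : ℕ → X} (h : ∀ i ≤ k, s i = s' i) :
    ExtSet k s = ExtSet k s' := by
  have h' : ∀ i ≤ k, s' i = s i := fun i hi => (h i hi).symm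
  ext i
  constructor <;> rintro (hm | hm)
  · exact Or.inl (isLocMax_congr h hm)
  · exact Or.inr (isLocMin_congr h hm)
  · exact Or.inl (isLocMax_congr h' hm)
  · exact Or.inr (isLocMin_congr h' hm)

/-- transfer an extremum along an index map preserving the relevant values -/
private lemma ext_transfer {k k' : ℕ} {s s' : ℕ → X} {i i' : ℕ}
    (hik : i' ≤ k')
    (h0 : i' ≠ 0 → i ≠ 0 ∧ s' (i' - 1) = s (i - 1) ∧ s' i' = s i)
    (hk : i' ≠ k' → i ≠ k ∧ s' (i' + 1) = s (i + 1) ∧ s' i' = s i) :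
    i ∈ ExtSet k s → i' ∈ ExtSet k' s' := by
  rintro (⟨_, hl, hr⟩ | ⟨_, hl, hr⟩)
  · refine Or.inl ⟨hik, fun h => ?_, fun h => ?_⟩
    · obtain ⟨hi, e1, e2⟩ := h0 h; rw [e1, e2]; exact hl hi
    · obtain ⟨hi, e1, e2⟩ := hk h; rw [e1, e2]; exact hr hi
  · refine Or.inr ⟨hik, fun h => ?_, fun h => ?_⟩
    · obtain ⟨hi, e1, e2⟩ := h0 h; rw [e1, e2]; exact hl hi
    · obtain ⟨hi, e1, e2⟩ := hk h; rw [e1, e2]; exact hr hi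

/-- transfer an extremum along an index-reversing map -/
private lemma ext_transfer_flip {k k' : ℕ} {s s' : ℕ → X} {i i' : ℕ}
    (hik : i' ≤ k')
    (h0 : i' ≠ 0 → i ≠ k ∧ s' (i' - 1) = s (i + 1) ∧ s' i' = s i)
    (hk : i' ≠ k' → i ≠ 0 ∧ s' (i' + 1) = s (i - 1) ∧ s' i' = s i) :
    i ∈ ExtSet k s → i' ∈ ExtSet k' s' := by
  rintro (⟨_, hl, hr⟩ | ⟨_, hl, hr⟩)
  · refine Or.inl ⟨hik, fun h => ?_, fun h => ?_⟩
    · obtain ⟨hi, e1, e2⟩ := h0 h; rw [e1, e2]; exact hr hi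
    · obtain ⟨hi, e1, e2⟩ := hk h; rw [e1, e2]; exact hl hi
  · refine Or.inr ⟨hik, fun h => ?_, fun h => ?_⟩
    · obtain ⟨hi, e1, e2⟩ := h0 h; rw [e1, e2]; exact hr hi
    · obtain ⟨hi, e1, e2⟩ := hk h; rw [e1, e2]; exact hl hi

/-- endpoints of a nonempty list with pairwise-distinct neighbours are extrema -/
private lemma zero_mem_extSet {l : List X} (hl : l ≠ []) (hc : Chain' (· ≠ ·) l) (d : X) :
    0 ∈ ExtSet (l.length - 1) (fun i => l.getD i d) := by
  rcases Nat.lt_or_ge 1 l.length with h2 | h1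
  · have hne : l.getD 0 d ≠ l.getD 1 d := by
      rw [getD_eq_getElem l d (by omega), getD_eq_getElem l d h2]
      have := isChain_iff_getElem.mp hc 0 (by omega)
      simpa using this
    rcases hne.lt_or_gt with h | h
    · exact Or.inr ⟨Nat.zero_le _, fun h0 => absurd rfl h0, fun _ => h⟩
    · exact Or.inl ⟨Nat.zero_le _, fun h0 => absurd rfl h0, fun _ => h⟩
  · have hlen : 0 < l.length := length_pos_iff.mpr hl
    have hk : l.length - 1 = 0 := by omega
    exact Or.inl ⟨Nat.zero_le _, fun h0 => absurd rfl h0,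
      fun h0 => absurd hk.symm h0⟩

private lemma last_mem_extSet {l : List X} (hl : l ≠ []) (hc : Chain' (· ≠ ·) l) (d : X) :
    l.length - 1 ∈ ExtSet (l.length - 1) (fun i => l.getD i d) := by
  have hpos : 0 < l.length := length_pos_iff.mpr hl
  rcases Nat.lt_or_ge 1 l.length with h2 | h1
  · set k := l.length - 1 with hk
    have hne : l.getD (k - 1) d ≠ l.getD k d := by
      rw [getD_eq_getElem l d (by omega), getD_eq_getElem l d (by omega)]
      have := isChain_iff_getElem.mp hc (k - 1) (by omega)
      have hkk : k - 1 + 1 = k := by omega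
      simpa [hkk] using this
    rcases hne.lt_or_gt with h | h
    · exact Or.inl ⟨le_rfl, fun _ => h, fun h0 => absurd rfl h0⟩
    · exact Or.inr ⟨le_rfl, fun _ => h, fun h0 => absurd rfl h0⟩
  · have hk : l.length - 1 = 0 := by omega
    rw [hk]
    exact Or.inl ⟨Nat.zero_le _, fun h0 => absurd rfl h0, fun h0 => absurd rfl h0⟩

/-- number of local extrema of the support list -/
private noncomputable def listEta (l : List X) : ℕ :=
  if h : l = [] then 0
  else (ExtSet (l.length - 1) (fun i => l.getD i (l.head h))).ncard

private lemma listEta_eq (l : List X) (hl : l ≠ []) (d : X) :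
    listEta l = (ExtSet (l.length - 1) (fun i => l.getD i d)).ncard := by
  rw [listEta, dif_neg hl]
  congr 1
  apply extSet_congr
  intro i hi
  have hlen : 0 < l.length := length_pos_iff.mpr hl
  have hilt : i < l.length := by omega
  rw [getD_eq_getElem l _ hilt, getD_eq_getElem l _ hilt]

private lemma listEta_reverse (l : List X) : listEta l.reverse = listEta l := by
  rcases eq_or_ne l [] with rfl | hl
  · simp
  have hrl : l.reverse ≠ [] := by simpa using hl
  set d := l.head hl with hd
  rw [listEta_eq l hl d, listEta_eq l.reverse hrl d]
  set k := l.length - 1 with hk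
  have hlen : 0 < l.length := length_pos_iff.mpr hl
  have hrev : ExtSet (l.reverse.length - 1) (fun i => l.reverse.getD i d)
      = ExtSet k (fun i => l.getD (k - i) d) := by
    rw [length_reverse]
    apply extSet_congr
    intro i hi
    have hilt : i < l.length := by omega
    rw [getD_eq_getElem _ _ (by simpa using hilt), getD_eq_getElem l _ (by omega)]
    simp only [getElem_reverse]
    rfl
  rw [hrev]
  have himg : ExtSet k (fun i => l.getD (k - i) d)
      = (fun i => k - i) '' ExtSet k (fun i => l.getD i d) := by
    ext i
    constructor
    · intro hi
      have hik : i ≤ k := extSet_subset _ _ hi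
      refine ⟨k - i, ?_, ?_⟩
      swap
      · show k - (k - i) = i
        omega
      refine ext_transfer_flip (by omega) (fun h => ⟨by omega, ?_, ?_⟩)
        (fun h => ⟨by omega, ?_, ?_⟩) hi
      · show l.getD (k - i - 1) d = l.getD (k - (i + 1)) d
        congr 1 <;> omega
      · rfl
      · show l.getD (k - i + 1) d = l.getD (k - (i - 1)) d
        congr 1 <;> omega
      · rfl
    · rintro ⟨j, hj, rfl⟩
      have hjk : j ≤ k := extSet_subset _ _ hj
      show k - j ∈ ExtSet k fun i => l.getD (k - i) d
      refine ext_transfer_flip (by omega) (fun h => ⟨by omega, ?_, ?_⟩)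
        (fun h => ⟨by omega, ?_, ?_⟩) hj
      · show l.getD (k - (k - j - 1)) d = l.getD (j + 1) d
        congr 1 <;> omega
      · show l.getD (k - (k - j)) d = l.getD j d
        congr 1 <;> omega
      · show l.getD (k - (k - j + 1)) d = l.getD (j - 1) d
        congr 1 <;> omega
      · show l.getD (k - (k - j)) d = l.getD j d
        congr 1 <;> omega
  rw [himg]
  apply Set.ncard_image_of_injOn
  intro i hi j hj hij
  have hik := extSet_subset _ _ hi
  have hjk := extSet_subset _ _ hj
  simp only [Set.mem_Iic] at hik hjk
  have hij' : k - i = k - j := hij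
  omega

private lemma listEta_splice (u s1 s2 t : List X)
    (h1 : Chain' (· ≠ ·) (u ++ s1)) (h2 : Chain' (· ≠ ·) (s2 ++ t)) :
    listEta (u ++ t) ≤ listEta (u ++ s1) + listEta (s2 ++ t) := by
  rcases eq_or_ne (u ++ t) [] with hnil | hl
  · simp [listEta, hnil]
  set l := u ++ t with hldef
  set l1 := u ++ s1 with hl1def
  set l2 := s2 ++ t with hl2def
  set d := l.head hl with hd
  set nu := u.length with hnu
  set m2 := s2.length with hm2
  set k := l.length - 1 with hk
  set k1 := l1.length - 1 with hk1
  set k2 := l2.length - 1 with hk2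
  have hlen : l.length = nu + t.length := by rw [hldef]; simp [hnu]
  have hlen1 : l1.length = nu + s1.length := by rw [hl1def]; simp [hnu]
  have hlen2 : l2.length = m2 + t.length := by rw [hl2def]; simp [hm2]
  have hlpos : 0 < l.length := length_pos_iff.mpr hl
  set sfun : ℕ → X := fun i => l.getD i d with hsfun
  set sig1 : ℕ → X := fun i => l1.getD i d with hsig1
  set sig2 : ℕ → X := fun i => l2.getD i d with hsig2
  set E := ExtSet k sfun with hE
  set E1 := if l1 = [] then (∅ : Set ℕ) else ExtSet k1 sig1 with hE1
  set E2 := if l2 = [] then (∅ : Set ℕ) else ExtSet k2 sig2 with hE2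
  have hvu : ∀ j, j < nu → sfun j = sig1 j := by
    intro j hj
    show (u ++ t).getD j d = (u ++ s1).getD j d
    rw [getD_append u t d j hj, getD_append u s1 d j hj]
  have hvt : ∀ j, nu ≤ j → sfun j = sig2 (j - nu + m2) := by
    intro j hj
    show (u ++ t).getD j d = (s2 ++ t).getD (j - nu + m2) d
    rw [getD_append_right u t d j hj, getD_append_right s2 t d _ (by omega)]
    congr 1
    omega
  set f : ℕ → ℕ := fun i =>
    if i + 1 < nu then i
    else if i + 1 = nu then k1
    else (k1 + 1) + (if i = nu then 0 else i - nu + m2) with hf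
  have key1 : ∀ i ∈ E, f i ∈ E1 ∪ (fun j => (k1 + 1) + j) '' E2 := by
    intro i hi
    have hik : i ≤ k := extSet_subset _ _ hi
    by_cases hA : i + 1 < nu
    · -- interior of u
      left
      have hu_ne : l1 ≠ [] := by
        intro hcon
        have := congrArg List.length hcon
        simp only [hlen1] at this
        simp at this
        omega
      rw [hE1, if_neg hu_ne]
      simp only [hf, if_pos hA]
      refine ext_transfer (s := sfun) (k := k) (by omega)
        (fun h => ⟨h, (hvu (i-1) (by omega)).symm, (hvu i (by omega)).symm⟩)
        (fun h => ⟨by omega, (hvu (i+1) hA).symm, (hvu i (by omega)).symm⟩) hi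
    by_cases hB : i + 1 = nu
    · -- left junction: last index of l1 is always an extremum
      left
      have hu_ne : l1 ≠ [] := by
        intro hcon
        have := congrArg List.length hcon
        simp only [hlen1] at this
        simp at this
        omega
      rw [hE1, if_neg hu_ne]
      simp only [hf, if_neg hA, if_pos hB]
      exact last_mem_extSet hu_ne h1 d
    · -- in t (including right junction)
      have hinu : nu ≤ i := by omega
      have ht_ne : t ≠ [] := by
        intro hcon
        rw [hcon] at hlen
        simp at hlen
        omega
      have hl2_ne : l2 ≠ [] := by
        intro hcon
        have := congrArg List.length hcon
        simp only [hlen2] at this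
        simp at this
        exact ht_ne this.2
      right
      by_cases hC : i = nu
      · refine ⟨0, ?_, ?_⟩
        · rw [hE2, if_neg hl2_ne]
          exact zero_mem_extSet hl2_ne h2 d
        · simp only [hf, if_neg hA, if_neg hB, if_pos hC]
      · have hgt : nu < i := by omega
        refine ⟨i - nu + m2, ?_, ?_⟩
        · rw [hE2, if_neg hl2_ne]
          refine ext_transfer (s := sfun) (k := k) (by omega)
            (fun h => ⟨by omega, ?_, (hvt i (by omega)).symm⟩)
            (fun h => ⟨by omega, ?_, (hvt i (by omega)).symm⟩) hi
          · show sig2 (i - nu + m2 - 1) = sfun (i - 1)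
            rw [hvt (i-1) (by omega)]
            congr 1
            omega
          · show sig2 (i - nu + m2 + 1) = sfun (i + 1)
            rw [hvt (i+1) (by omega)]
            congr 1
            omega
        · simp only [hf, if_neg hA, if_neg hB, if_neg hC]
  have key2 : Set.InjOn f E := by
    intro i _ j _ hij
    simp only [hf] at hij
    split_ifs at hij <;> omega
  have hfin1 : E1.Finite := by
    rw [hE1]; split
    · exact Set.finite_empty
    · exact extSet_finite _ _
  have hfin2 : E2.Finite := by
    rw [hE2]; split
    · exact Set.finite_empty
    · exact extSet_finite _ _
  have hsub : f '' E ⊆ E1 ∪ (fun j => (k1 + 1) + j) '' E2 := by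
    rintro _ ⟨i, hi, rfl⟩
    exact key1 i hi
  have hmain : listEta l ≤ E1.ncard + E2.ncard := by
    rw [listEta_eq l hl d, ← Set.ncard_image_of_injOn key2]
    calc (f '' E).ncard ≤ (E1 ∪ (fun j => (k1 + 1) + j) '' E2).ncard :=
          Set.ncard_le_ncard hsub (hfin1.union (hfin2.image _))
      _ ≤ E1.ncard + ((fun j => (k1 + 1) + j) '' E2).ncard := Set.ncard_union_le _ _
      _ = E1.ncard + E2.ncard := by
          rw [Set.ncard_image_of_injective _ (add_right_injective (k1 + 1))]
  have he1 : E1.ncard = listEta l1 := by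
    rw [hE1]
    split
    · rename_i hcon
      rw [hcon]
      simp [listEta]
    · rename_i hne
      rw [listEta_eq l1 hne d]
  have he2 : E2.ncard = listEta l2 := by
    rw [hE2]
    split
    · rename_i hcon
      rw [hcon]
      simp [listEta]
    · rename_i hne
      rw [listEta_eq l2 hne d]
  rw [he1, he2] at hmain
  exact hmain


private lemma eta_eq_listEta {X : Type*} [LinearOrder X] (w : FreeGroup X) :
    eta w = listEta (wordSupport w) := rfl

private lemma wordSupport_inv {X : Type*} [LinearOrder X] (a : FreeGroup X) :
    wordSupport a⁻¹ = (wordSupport a).reverse := by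
  unfold wordSupport
  rw [FreeGroup.toWord_inv]
  have hmap : (FreeGroup.invRev (FreeGroup.toWord a)).map Prod.fst
      = ((FreeGroup.toWord a).map Prod.fst).reverse := by
    simp [FreeGroup.invRev, List.map_reverse, List.map_map, Function.comp]
  rw [hmap, destutter_reverse]

end Counting

end Auxiliary

/-- For a linearly ordered alphabet `X`, the function `η` counting local extrema of the
support of a word is a seminorm on the free group `F(X)`:
`η (a * b) ≤ η a + η b` and `η a⁻¹ = η a`. -/
theorem stmt17 {X : Type*} [LinearOrder X] (a b : FreeGroup X) :
    eta (a * b) ≤ eta a + eta b ∧ eta a⁻¹ = eta a := by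
  constructor
  · -- subadditivity
    obtain ⟨p, q, hp, hq, he⟩ := toWord_mul_decomp a b
    obtain ⟨r1, hr1⟩ := hp
    obtain ⟨r2, hr2⟩ := hq
    set P := p.map Prod.fst with hP
    set Q := q.map Prod.fst with hQ
    set R1 := r1.map Prod.fst with hR1
    set R2 := r2.map Prod.fst with hR2
    obtain ⟨T, hT, hTs⟩ := destutter_append P Q
    obtain ⟨S1a, hS1, -⟩ := destutter_append P R1
    have hsab : wordSupport (a * b) = List.destutter (· ≠ ·) P ++ T := by
      unfold wordSupport
      rw [he, List.map_append, hT]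
    have hsa : wordSupport a = List.destutter (· ≠ ·) P ++ S1a := by
      unfold wordSupport
      rw [← hr1, List.map_append, hS1]
    have hsb' : T <:+ wordSupport b := by
      refine hTs.trans ?_
      unfold wordSupport
      rw [← hr2, List.map_append]
      exact destutter_suffix R2 Q
    obtain ⟨S2a, hS2⟩ := hsb'
    have hch1 : List.Chain' (· ≠ ·) (List.destutter (· ≠ ·) P ++ S1a) := by
      rw [← hsa]
      unfold wordSupport
      exact List.isChain_destutter (· ≠ ·) _
    have hch2 : List.Chain' (· ≠ ·) (S2a ++ T) := by
      rw [hS2]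
      unfold wordSupport
      exact List.isChain_destutter (· ≠ ·) _
    calc eta (a * b) = listEta (List.destutter (· ≠ ·) P ++ T) := by
          rw [eta_eq_listEta, hsab]
      _ ≤ listEta (List.destutter (· ≠ ·) P ++ S1a) + listEta (S2a ++ T) :=
          listEta_splice _ _ _ _ hch1 hch2
      _ = eta a + eta b := by
          rw [eta_eq_listEta a, eta_eq_listEta b, hsa, hS2]
  · rw [eta_eq_listEta, eta_eq_listEta, wordSupport_inv, listEta_reverse]
end
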